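/- arXiv:2202.11298 — 2 statements merged into one kernel-verified Lean document; each statement's English description precedes it below -/
import Mathlib

section
/- Suppose the delay system ẋ(t) = f(x_t) is forward complete on C⁰. Then the following are equivalent: (a) the system satisfies Lyapunov stability (for every ε > 0 there exists δ > 0 such that ‖φ(t,x₀)‖_∞ ≤ ε for all t ≥ 0 and all x₀ ∈ C⁰ with ‖x₀‖_∞ ≤ δ), global attractivity (for every x₀ ∈ C⁰, ‖φ(t,x₀)‖_∞ → 0 as t → ∞), and robust forward completeness (for every ρ, T > 0 one has sup{‖φ(t,x₀)‖_∞ : t ∈ [0,T], x₀ ∈ C⁰, ‖x₀‖_∞ ≤ ρ} < ∞); (b) the system is uniformly globally asymptotically stable: there exists a class-KL function σ such that ‖φ(t,x₀)‖_∞ ≤ σ(‖x₀‖_∞, t) for all t ≥ 0 and all x₀ ∈ C⁰. -/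
open Set MeasureTheory Filter Topology
open scoped ENNReal NNReal

noncomputable section

abbrev Vec (n : ℕ) := EuclideanSpace ℝ (Fin n)

variable {n : ℕ}

/-- The segment `x_t` of a history `x : ℝ → ℝⁿ`, i.e. `x_t(s) = x(t+s)`
(only its values on `[-r,0]` are relevant). -/
def seg (r : ℝ) (x : ℝ → Vec n) (t : ℝ) : ℝ → Vec n := fun s => x (t + s)

/-- Sup norm over `[-r,0]`. -/
def supN (r : ℝ) (g : ℝ → Vec n) : ℝ := sSup ((fun s => ‖g s‖) '' Icc (-r) 0)

/-- Membership in `C⁰ = C([-r,0];ℝⁿ)`. -/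
def MemC0 (r : ℝ) (g : ℝ → Vec n) : Prop := ContinuousOn g (Icc (-r) 0)

/-- `f` vanishes at `0`, depends only on the values of its argument on `[-r,0]`,
and is Lipschitz on bounded subsets of `C⁰` with a nondecreasing (nonnegative)
modulus `L`. -/
def GoodRHS (r : ℝ) (f : (ℝ → Vec n) → Vec n) (L : ℝ → ℝ) : Prop :=
  f 0 = 0 ∧
  (∀ x y : ℝ → Vec n, EqOn x y (Icc (-r) 0) → f x = f y) ∧
  Monotone L ∧ (∀ s : ℝ, 0 ≤ L s) ∧
  ∀ R : ℝ, ∀ x y : ℝ → Vec n, MemC0 r x → MemC0 r y → supN r x ≤ R → supN r y ≤ R →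
    ‖f x - f y‖ ≤ L R * supN r (x - y)

/-- `x : ℝ → ℝⁿ` is a solution on `[-r, b)` (with `b ∈ (0,∞]` an extended
nonnegative real) of the delay system `ẋ(t) = f(x_t)` with initial condition `x0`:
it is continuous on `[-r,b)`, coincides with `x0` on `[-r,0]`, and satisfies the
integral equation `x(t) = x(0) + ∫₀ᵗ f(x_s) ds` on `[0,b)`. -/
def IsSol (r : ℝ) (f : (ℝ → Vec n) → Vec n) (x0 x : ℝ → Vec n) (b : ℝ≥0∞) : Prop :=
  ContinuousOn x {t : ℝ | -r ≤ t ∧ ENNReal.ofReal t < b} ∧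
  EqOn x x0 (Icc (-r) 0) ∧
  ∀ t : ℝ, 0 ≤ t → ENNReal.ofReal t < b → x t = x 0 + ∫ s in (0:ℝ)..t, f (seg r x s)

/-- Class `KL` functions `σ : [0,∞)×[0,∞) → [0,∞)`. -/
def ClassKL (σ : ℝ → ℝ → ℝ) : Prop :=
  (∀ s t : ℝ, 0 ≤ s → 0 ≤ t → 0 ≤ σ s t) ∧
  (∀ t : ℝ, 0 ≤ t →
    ContinuousOn (fun s => σ s t) (Ici 0) ∧ StrictMonoOn (fun s => σ s t) (Ici 0) ∧
      σ 0 t = 0) ∧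
  (∀ s : ℝ, 0 ≤ s →
    AntitoneOn (fun t => σ s t) (Ici 0) ∧ Tendsto (fun t => σ s t) atTop (nhds 0))

/-- Class `K∞` functions `a : [0,∞) → [0,∞)`. -/
def ClassKInf (a : ℝ → ℝ) : Prop :=
  (∀ s : ℝ, 0 ≤ s → 0 ≤ a s) ∧ ContinuousOn a (Ici 0) ∧ StrictMonoOn a (Ici 0) ∧
  a 0 = 0 ∧ Tendsto a atTop atTop

/-- The set of Hölder difference quotients `‖g t - g s‖ / |t-s|^α` over a set `S`. -/
def hRatios (α : ℝ) (S : Set ℝ) (g : ℝ → Vec n) : Set ℝ :=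
  {c | ∃ t ∈ S, ∃ s ∈ S, t ≠ s ∧ c = ‖g t - g s‖ / |t - s| ^ α}

/-- Membership in the Hölder space `C^{0,α}([-r,0])`. -/
def MemHol (r α : ℝ) (g : ℝ → Vec n) : Prop :=
  MemC0 r g ∧ BddAbove (hRatios α (Icc (-r) 0) g)

/-- The Hölder norm `max(‖g‖_∞, [g]_α)`. -/
def holderNorm (r α : ℝ) (g : ℝ → Vec n) : ℝ :=
  max (supN r g) (sSup (hRatios α (Icc (-r) 0) g))

/-- Membership in the Sobolev space `W^{1,p}([-r,0])`: `g` is absolutely continuous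
on `[-r,0]` (i.e. the integral of an integrable function `d`, which is then its a.e.
derivative) with `d ∈ L^p((-r,0))`. -/
def MemW (r : ℝ) (p : ℝ≥0∞) (g : ℝ → Vec n) : Prop :=
  ∃ d : ℝ → Vec n, IntegrableOn d (Icc (-r) 0) ∧
    eLpNorm d p (volume.restrict (Ioo (-r) 0)) < ⊤ ∧
    ∀ t ∈ Icc (-r) 0, g t = g (-r) + ∫ s in (-r)..t, d s

/-- The Sobolev norm `‖g‖_∞ + ‖ġ‖_p`; for an absolutely continuous `g` the a.e.
derivative coincides a.e. on `(-r,0)` with `deriv g`. -/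
def sobNorm (r : ℝ) (p : ℝ≥0∞) (g : ℝ → Vec n) : ℝ :=
  supN r g + (eLpNorm (deriv g) p (volume.restrict (Ioo (-r) 0))).toReal

/-- The Hölder exponent `1 - 1/p`, with the convention `1/∞ = 0`. -/
def hexp (p : ℝ≥0∞) : ℝ := 1 - (p.toReal)⁻¹

namespace DDE

open scoped BoundedContinuousFunction

lemma iccNe {r : ℝ} (hr : 0 < r) : (Icc (-r) (0:ℝ)).Nonempty :=
  ⟨0, by constructor <;> linarith⟩

lemma bddNormImage {r : ℝ} {g : ℝ → Vec n} (hg : MemC0 r g) :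
    BddAbove ((fun s => ‖g s‖) '' Icc (-r) 0) :=
  (isCompact_Icc.image_of_continuousOn (continuous_norm.comp_continuousOn hg)).bddAbove

lemma supN_le {r : ℝ} (hr : 0 < r) {g : ℝ → Vec n} {M : ℝ}
    (h : ∀ s ∈ Icc (-r) (0:ℝ), ‖g s‖ ≤ M) : supN r g ≤ M :=
  csSup_le ((iccNe hr).image _) (by rintro v ⟨s, hs, rfl⟩; exact h s hs)

lemma le_supN {r : ℝ} {g : ℝ → Vec n} (hg : MemC0 r g) {s : ℝ}
    (hs : s ∈ Icc (-r) (0:ℝ)) : ‖g s‖ ≤ supN r g :=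
  le_csSup (bddNormImage hg) ⟨s, hs, rfl⟩

lemma supN_nonneg {r : ℝ} (hr : 0 < r) {g : ℝ → Vec n} (hg : MemC0 r g) : 0 ≤ supN r g :=
  le_trans (norm_nonneg _) (le_supN hg ⟨by linarith, le_refl 0⟩)

lemma solSet (r : ℝ) : {t : ℝ | -r ≤ t ∧ ENNReal.ofReal t < (⊤ : ℝ≥0∞)} = Ici (-r) := by
  ext t; simp [ENNReal.ofReal_lt_top]

lemma _root_.IsSol.cont {r : ℝ} {f : (ℝ → Vec n) → Vec n} {x0 x : ℝ → Vec n}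
    (h : IsSol r f x0 x ⊤) : ContinuousOn x (Ici (-r)) := by
  have h1 := h.1; rwa [solSet] at h1

lemma _root_.IsSol.eqOn {r : ℝ} {f : (ℝ → Vec n) → Vec n} {x0 x : ℝ → Vec n}
    (h : IsSol r f x0 x ⊤) : EqOn x x0 (Icc (-r) 0) := h.2.1

lemma _root_.IsSol.integral {r : ℝ} {f : (ℝ → Vec n) → Vec n} {x0 x : ℝ → Vec n}
    (h : IsSol r f x0 x ⊤) : ∀ t : ℝ, 0 ≤ t →
      x t = x 0 + ∫ s in (0:ℝ)..t, f (seg r x s) :=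
  fun t ht => h.2.2 t ht (by simp [ENNReal.ofReal_lt_top])

lemma memC0_seg {r : ℝ} {x : ℝ → Vec n} (hx : ContinuousOn x (Ici (-r)))
    {t : ℝ} (ht : 0 ≤ t) : MemC0 r (seg r x t) := by
  have : ContinuousOn (x ∘ fun s => t + s) (Icc (-r) 0) := by
    apply ContinuousOn.comp hx ((continuous_const.add continuous_id).continuousOn)
    intro s hs
    simp only [mem_Icc] at hs
    simp only [Pi.add_apply, id_eq, mem_Ici]
    linarith [hs.1]
  exact this

lemma supN_seg_le {r : ℝ} (hr : 0 < r) {x : ℝ → Vec n} {t M : ℝ}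
    (h : ∀ u ∈ Icc (t - r) t, ‖x u‖ ≤ M) : supN r (seg r x t) ≤ M :=
  supN_le hr fun s hs => h (t + s) ⟨by linarith [hs.1], by linarith [hs.2]⟩

lemma norm_le_supN_seg {r : ℝ} {x : ℝ → Vec n} (hx : ContinuousOn x (Ici (-r)))
    {t u : ℝ} (ht : 0 ≤ t) (hu : u ∈ Icc (t - r) t) : ‖x u‖ ≤ supN r (seg r x t) := by
  have h := le_supN (memC0_seg hx ht) (s := u - t) ⟨by linarith [hu.1], by linarith [hu.2]⟩
  have e : t + (u - t) = u := by ring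
  simpa only [seg, e] using h



lemma Fcont {r : ℝ} (hr : 0 < r) {f : (ℝ → Vec n) → Vec n} {L : ℝ → ℝ} (hf : GoodRHS r f L)
    {x0 x : ℝ → Vec n} (hx : IsSol r f x0 x ⊤) :
    ContinuousOn (fun s => f (seg r x s)) (Ici 0) := by
  intro s₀ hs₀
  simp only [mem_Ici] at hs₀
  have hsub : Icc (-r) (s₀ + 1) ⊆ Ici (-r) := Icc_subset_Ici_self
  obtain ⟨M₀, hM₀⟩ := isCompact_Icc.exists_bound_of_continuousOn (hx.cont.mono hsub)
  set M := max M₀ 0 with hM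
  have hMb : ∀ u ∈ Icc (-r) (s₀ + 1), ‖x u‖ ≤ M := fun u hu =>
    le_trans (hM₀ u hu) (le_max_left _ _)
  have hu := isCompact_Icc.uniformContinuousOn_of_continuous (hx.cont.mono hsub)
  rw [Metric.uniformContinuousOn_iff] at hu
  rw [Metric.continuousWithinAt_iff]
  intro ε hε
  have hLM : 0 ≤ L M := hf.2.2.2.1 M
  obtain ⟨δ₀, hδ₀, hδ⟩ := hu (ε / (2 * (L M + 1))) (by positivity)
  refine ⟨min δ₀ 1, by positivity, ?_⟩
  intro s hs hdist
  simp only [mem_Ici] at hs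
  have hs1 : s ≤ s₀ + 1 := by
    have := abs_lt.1 (lt_of_lt_of_le hdist (min_le_right _ _))
    rw [Real.dist_eq] at hdist
    have h2 := abs_lt.1 (lt_of_lt_of_le hdist (min_le_right _ _))
    linarith [h2.2]
  have hbnd : ∀ w : ℝ, 0 ≤ w → w ≤ s₀ + 1 → supN r (seg r x w) ≤ M := by
    intro w hw0 hw1
    apply supN_seg_le hr
    intro u hu'
    exact hMb u ⟨by linarith [hu'.1], by linarith [hu'.2]⟩
  have hsM : supN r (seg r x s) ≤ M := hbnd s hs hs1
  have hs₀M : supN r (seg r x s₀) ≤ M := hbnd s₀ hs₀ (by linarith)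
  have hLip := hf.2.2.2.2 M (seg r x s) (seg r x s₀) (memC0_seg hx.cont hs)
    (memC0_seg hx.cont hs₀) hsM hs₀M
  have hsupd : supN r (seg r x s - seg r x s₀) ≤ ε / (2 * (L M + 1)) := by
    apply supN_le hr
    intro u hu'
    have h1 : s + u ∈ Icc (-r) (s₀ + 1) := ⟨by linarith [hu'.1], by linarith [hu'.2]⟩
    have h2 : s₀ + u ∈ Icc (-r) (s₀ + 1) := ⟨by linarith [hu'.1], by linarith [hu'.2]⟩
    have h3 : dist (s + u) (s₀ + u) < δ₀ := by
      rw [dist_add_right]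
      exact lt_of_lt_of_le hdist (min_le_left _ _)
    have := hδ (s + u) h1 (s₀ + u) h2 h3
    rw [dist_eq_norm] at this
    exact le_of_lt this
  rw [dist_eq_norm]
  calc ‖f (seg r x s) - f (seg r x s₀)‖ ≤ L M * supN r (seg r x s - seg r x s₀) := hLip
    _ ≤ L M * (ε / (2 * (L M + 1))) := by
        apply mul_le_mul_of_nonneg_left hsupd hLM
    _ ≤ (L M + 1) * (ε / (2 * (L M + 1))) := by
        apply mul_le_mul_of_nonneg_right (by linarith) (by positivity)
    _ = ε / 2 := by
        field_simp
    _ < ε := half_lt_self hε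

lemma F_intInt {r : ℝ} (hr : 0 < r) {f : (ℝ → Vec n) → Vec n} {L : ℝ → ℝ}
    (hf : GoodRHS r f L) {x0 x : ℝ → Vec n} (hx : IsSol r f x0 x ⊤)
    {a b : ℝ} (ha : 0 ≤ a) (hb : 0 ≤ b) :
    IntervalIntegrable (fun s => f (seg r x s)) volume a b := by
  apply ContinuousOn.intervalIntegrable
  apply (Fcont hr hf hx).mono
  intro t htm
  exact le_trans (le_inf ha hb) htm.1

lemma integral_sol {r : ℝ} (hr : 0 < r) {f : (ℝ → Vec n) → Vec n} {L : ℝ → ℝ}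
    (hf : GoodRHS r f L) {x0 x : ℝ → Vec n} (hx : IsSol r f x0 x ⊤)
    {a b : ℝ} (ha : 0 ≤ a) (hab : a ≤ b) :
    ∫ s in a..b, f (seg r x s) = x b - x a := by
  have hb : 0 ≤ b := le_trans ha hab
  have e1 : ∫ s in (0:ℝ)..a, f (seg r x s) = x a - x 0 :=
    eq_sub_of_add_eq' (hx.integral a ha).symm
  have e2 : ∫ s in (0:ℝ)..b, f (seg r x s) = x b - x 0 :=
    eq_sub_of_add_eq' (hx.integral b hb).symm
  have hadd := intervalIntegral.integral_add_adjacent_intervals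
    (F_intInt hr hf hx le_rfl ha) (F_intInt hr hf hx ha hb)
  rw [e1, e2] at hadd
  have := eq_sub_of_add_eq' hadd
  rw [this]; abel

lemma seg_shift {r : ℝ} (x : ℝ → Vec n) (τ t u : ℝ) :
    seg r (fun w => x (w + τ)) t u = seg r x (τ + t) u := by
  simp only [seg]; congr 1; ring

lemma _root_.IsSol.shift {r : ℝ} (hr : 0 < r) {f : (ℝ → Vec n) → Vec n} {L : ℝ → ℝ}
    (hf : GoodRHS r f L) {x0 x : ℝ → Vec n} (hx : IsSol r f x0 x ⊤)
    {τ : ℝ} (hτ : 0 ≤ τ) :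
    IsSol r f (seg r x τ) (fun t => x (t + τ)) ⊤ := by
  refine ⟨?_, ?_, ?_⟩
  · rw [solSet]
    apply ContinuousOn.comp hx.cont ((continuous_id.add continuous_const).continuousOn)
    intro t htm
    simp only [Pi.add_apply, mem_Ici, id_eq] at htm ⊢
    linarith
  · intro t ht
    simp only [seg]
    rw [add_comm]
  · intro t ht _
    have key : ∀ s, f (seg r (fun w => x (w + τ)) s) = f (seg r x (τ + s)) := by
      intro s
      have he : seg r (fun w => x (w + τ)) s = seg r x (τ + s) :=
        funext (seg_shift x τ s)
      rw [he]
    have hint : ∫ s in (0:ℝ)..t, f (seg r (fun w => x (w + τ)) s)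
        = ∫ s in (0:ℝ)..t, f (seg r x (τ + s)) := by
      apply intervalIntegral.integral_congr
      intro s _
      exact key s
    have hcmp : ∫ s in (0:ℝ)..t, f (seg r x (τ + s))
        = ∫ w in (τ + 0)..(τ + t), f (seg r x w) :=
      intervalIntegral.integral_comp_add_left (fun w => f (seg r x w)) τ
    have hval : ∫ w in (τ + 0)..(τ + t), f (seg r x w) = x (τ + t) - x τ := by
      have := integral_sol hr hf hx (a := τ + 0) (b := τ + t) (by linarith) (by linarith)
      rw [add_zero] at this ⊢
      exact this
    show x (t + τ) = x (0 + τ) + ∫ s in (0:ℝ)..t, f (seg r (fun w => x (w + τ)) s)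
    rw [hint, hcmp, hval, zero_add, add_comm t τ]
    abel



def runSup (r : ℝ) (h : ℝ → ℝ) (t : ℝ) : ℝ := sSup (h '' Icc (-r) t)

lemma runSup_le {r : ℝ} {h : ℝ → ℝ} {t M : ℝ} (ht : -r ≤ t)
    (hb : ∀ u ∈ Icc (-r) t, h u ≤ M) : runSup r h t ≤ M :=
  csSup_le (Set.Nonempty.image _ ⟨-r, ⟨le_refl _, ht⟩⟩)
    (by rintro v ⟨u, hu, rfl⟩; exact hb u hu)

lemma le_runSup {r : ℝ} {h : ℝ → ℝ} (hh : ContinuousOn h (Ici (-r))) {t u : ℝ}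
    (hu : u ∈ Icc (-r) t) : h u ≤ runSup r h t :=
  le_csSup ((isCompact_Icc.image_of_continuousOn
    (hh.mono Icc_subset_Ici_self)).bddAbove) ⟨u, hu, rfl⟩

lemma runSup_mono {r : ℝ} {h : ℝ → ℝ} (hh : ContinuousOn h (Ici (-r))) {t t' : ℝ}
    (ht : -r ≤ t) (htt : t ≤ t') : runSup r h t ≤ runSup r h t' :=
  csSup_le_csSup ((isCompact_Icc.image_of_continuousOn
      (hh.mono Icc_subset_Ici_self)).bddAbove)
    (Set.Nonempty.image _ ⟨-r, ⟨le_refl _, ht⟩⟩)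
    (image_mono (Icc_subset_Icc_right htt))

lemma runSup_cont {r : ℝ} (hr : 0 < r) {h : ℝ → ℝ} (hh : ContinuousOn h (Ici (-r))) :
    ContinuousOn (runSup r h) (Ici 0) := by
  intro t ht
  simp only [mem_Ici] at ht
  rw [Metric.continuousWithinAt_iff]
  intro ε hε
  -- upper bound neighborhood
  have hct : ContinuousWithinAt h (Ici (-r)) t := hh t (by simp only [mem_Ici]; linarith)
  rw [Metric.continuousWithinAt_iff] at hct
  obtain ⟨δ₁, hδ₁, hup⟩ := hct (ε / 4) (by positivity)
  -- lower bound: a near-maximizer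
  have hne : ((h '' Icc (-r) t)).Nonempty :=
    Set.Nonempty.image _ ⟨-r, ⟨le_refl _, by linarith⟩⟩
  have hlt : runSup r h t - ε / 4 < runSup r h t := by linarith
  obtain ⟨v, hv, hvgt⟩ := exists_lt_of_lt_csSup hne hlt
  obtain ⟨u, hu, rfl⟩ := hv
  -- choose δ₂ according to whether u < t or u = t
  rcases eq_or_lt_of_le hu.2 with hut | hut
  · -- u = t : use continuity of h at t
    obtain ⟨δ₂, hδ₂, hlow⟩ := hct (ε / 4) (by positivity)
    refine ⟨min δ₁ δ₂, by positivity, ?_⟩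
    intro t' ht' hd
    simp only [mem_Ici] at ht'
    have hd1 : dist t' t < δ₁ := lt_of_lt_of_le hd (min_le_left _ _)
    have hd2 : dist t' t < δ₂ := lt_of_lt_of_le hd (min_le_right _ _)
    rw [Real.dist_eq]
    rw [abs_sub_lt_iff]
    constructor
    · -- runSup t' - runSup t < ε
      have : runSup r h t' ≤ runSup r h t + ε / 4 := by
        apply runSup_le (by linarith)
        intro w hw
        rcases le_or_gt w t with hwt | hwt
        · exact le_trans (le_runSup hh ⟨hw.1, hwt⟩) (by linarith)
        · have hwIci : w ∈ Ici (-r) := mem_Ici.2 hw.1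
          have hdw : dist w t < δ₁ := by
            rw [Real.dist_eq, abs_of_nonneg (by linarith)]
            have h1 : w ≤ t' := hw.2
            have h2 : |t' - t| < δ₁ := by rwa [Real.dist_eq] at hd1
            rw [abs_lt] at h2
            linarith [h2.2]
          have := hup hwIci hdw
          rw [Real.dist_eq] at this
          rw [abs_lt] at this
          have hht : h t ≤ runSup r h t := le_runSup hh ⟨by linarith, le_refl _⟩
          linarith [this.2]
      linarith
    · -- runSup t - runSup t' < ε
      -- h t > runSup t - ε/4 (since u = t); h t' close to h t
      have htIci : t' ∈ Ici (-r) := mem_Ici.2 (by linarith)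
      have := hlow htIci hd2
      rw [Real.dist_eq, abs_lt] at this
      have hht' : h t' ≤ runSup r h t' := le_runSup hh ⟨by linarith, le_refl _⟩
      rw [hut] at hvgt
      linarith [this.1]
  · -- u < t
    refine ⟨min δ₁ (t - u), by simp only [lt_inf_iff]; exact ⟨hδ₁, by linarith⟩, ?_⟩
    intro t' ht' hd
    simp only [mem_Ici] at ht'
    have hd1 : dist t' t < δ₁ := lt_of_lt_of_le hd (min_le_left _ _)
    have hd2 : dist t' t < t - u := lt_of_lt_of_le hd (min_le_right _ _)
    rw [Real.dist_eq]
    rw [abs_sub_lt_iff]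
    constructor
    · have : runSup r h t' ≤ runSup r h t + ε / 4 := by
        apply runSup_le (by linarith)
        intro w hw
        rcases le_or_gt w t with hwt | hwt
        · exact le_trans (le_runSup hh ⟨hw.1, hwt⟩) (by linarith)
        · have hwIci : w ∈ Ici (-r) := mem_Ici.2 hw.1
          have hdw : dist w t < δ₁ := by
            rw [Real.dist_eq, abs_of_nonneg (by linarith)]
            have h2 : |t' - t| < δ₁ := by rwa [Real.dist_eq] at hd1
            rw [abs_lt] at h2
            linarith [h2.2, hw.2]
          have := hup hwIci hdw
          rw [Real.dist_eq, abs_lt] at this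
          have hht : h t ≤ runSup r h t := le_runSup hh ⟨by linarith, le_refl _⟩
          linarith [this.2]
      linarith
    · -- t' > u so h u ≤ runSup t'
      have hut' : u ≤ t' := by
        have h2 : |t' - t| < t - u := by rwa [Real.dist_eq] at hd2
        rw [abs_lt] at h2
        linarith [h2.1]
      have : h u ≤ runSup r h t' := le_runSup hh ⟨hu.1, hut'⟩
      linarith



lemma CD {r : ℝ} (hr : 0 < r) {f : (ℝ → Vec n) → Vec n} {L : ℝ → ℝ} (hf : GoodRHS r f L)
    {x0 y0 x y : ℝ → Vec n} (hx : IsSol r f x0 x ⊤) (hy : IsSol r f y0 y ⊤)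
    {T M : ℝ} (hT : 0 ≤ T)
    (hbx : ∀ t ∈ Icc (0:ℝ) T, supN r (seg r x t) ≤ M)
    (hby : ∀ t ∈ Icc (0:ℝ) T, supN r (seg r y t) ≤ M) :
    ∀ t ∈ Icc (0:ℝ) T, supN r (seg r (x - y) t) ≤ supN r (x - y) * Real.exp (L M * t) := by
  have hhc : ContinuousOn (fun u => ‖x u - y u‖) (Ici (-r)) := (hx.cont.sub hy.cont).norm
  set h : ℝ → ℝ := fun u => ‖x u - y u‖ with hh_def
  set K := L M with hK_def
  have hK0 : 0 ≤ K := hf.2.2.2.1 M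
  set m := runSup r h with hm_def
  have hmnn : ∀ t : ℝ, 0 ≤ t → 0 ≤ m t := fun t ht =>
    le_trans (norm_nonneg (x 0 - y 0)) (le_runSup hhc ⟨by linarith, ht⟩)
  have hm0 : 0 ≤ m 0 := hmnn 0 le_rfl
  have mc : ContinuousOn m (Ici 0) := runSup_cont hr hhc
  have mIntOn : ∀ t : ℝ, 0 ≤ t → IntervalIntegrable m volume 0 t := by
    intro t ht
    apply ContinuousOn.intervalIntegrable
    exact mc.mono fun w hw => le_trans (le_inf le_rfl ht) hw.1
  -- step 1 : the integral inequality
  have hstep : ∀ t ∈ Icc (0:ℝ) T, m t ≤ m 0 + K * ∫ s in (0:ℝ)..t, m s := by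
    intro t htmem
    obtain ⟨ht0, htT⟩ := htmem
    have hInn : 0 ≤ ∫ s in (0:ℝ)..t, m s :=
      intervalIntegral.integral_nonneg ht0 (fun s hs => hmnn s hs.1)
    apply runSup_le (by linarith)
    intro w hw
    rcases le_or_gt w 0 with hw0 | hw0
    · exact le_trans (le_runSup hhc ⟨hw.1, hw0⟩) (by nlinarith)
    · have hsub : x w - y w = (x 0 - y 0)
          + ∫ s in (0:ℝ)..w, (f (seg r x s) - f (seg r y s)) := by
        rw [intervalIntegral.integral_sub (F_intInt hr hf hx le_rfl hw0.le)
          (F_intInt hr hf hy le_rfl hw0.le), hx.integral w hw0.le, hy.integral w hw0.le]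
        abel
      have hnorm : h w ≤ h 0 + ‖∫ s in (0:ℝ)..w, (f (seg r x s) - f (seg r y s))‖ := by
        show ‖x w - y w‖ ≤ _
        rw [hsub]
        exact norm_add_le _ _
      have hptw : ∀ s ∈ Icc (0:ℝ) w, ‖f (seg r x s) - f (seg r y s)‖ ≤ K * m s := by
        intro s hs
        have hsT : s ∈ Icc (0:ℝ) T := ⟨hs.1, by linarith [hs.2, hw.2]⟩
        have hlip := hf.2.2.2.2 M (seg r x s) (seg r y s) (memC0_seg hx.cont hs.1)
          (memC0_seg hy.cont hs.1) (hbx s hsT) (hby s hsT)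
        refine le_trans hlip (mul_le_mul_of_nonneg_left ?_ hK0)
        apply supN_le hr
        intro v hv
        exact le_runSup hhc ⟨by linarith [hv.1, hs.1], by linarith [hv.2]⟩
      have hnint : ‖∫ s in (0:ℝ)..w, (f (seg r x s) - f (seg r y s))‖
          ≤ ∫ s in (0:ℝ)..w, K * m s := by
        calc ‖∫ s in (0:ℝ)..w, (f (seg r x s) - f (seg r y s))‖
            ≤ ∫ s in (0:ℝ)..w, ‖f (seg r x s) - f (seg r y s)‖ :=
              intervalIntegral.norm_integral_le_integral_norm hw0.le
          _ ≤ ∫ s in (0:ℝ)..w, K * m s := by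
              apply intervalIntegral.integral_mono_on hw0.le
              · apply ContinuousOn.intervalIntegrable
                apply ContinuousOn.norm
                apply ContinuousOn.sub
                · exact (Fcont hr hf hx).mono fun z hz => le_trans (le_inf le_rfl hw0.le) hz.1
                · exact (Fcont hr hf hy).mono fun z hz => le_trans (le_inf le_rfl hw0.le) hz.1
              · exact (mIntOn w hw0.le).const_mul K
              · exact hptw
      have hmono2 : ∫ s in (0:ℝ)..w, K * m s ≤ ∫ s in (0:ℝ)..t, K * m s := by
        apply intervalIntegral.integral_mono_interval le_rfl hw0.le hw.2
        · filter_upwards [ae_restrict_mem measurableSet_Ioc] with s hs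
          exact mul_nonneg hK0 (hmnn s hs.1.le)
        · exact (mIntOn t ht0).const_mul K
      have hfin : h w ≤ m 0 + ∫ s in (0:ℝ)..t, K * m s := by
        have hh0m : h 0 ≤ m 0 := le_runSup hhc ⟨by linarith, le_refl _⟩
        calc h w ≤ h 0 + ‖∫ s in (0:ℝ)..w, (f (seg r x s) - f (seg r y s))‖ := hnorm
          _ ≤ m 0 + ∫ s in (0:ℝ)..t, K * m s := add_le_add hh0m (le_trans hnint hmono2)
      rwa [intervalIntegral.integral_const_mul] at hfin
  -- step 2 : Gronwall
  set v : ℝ → ℝ := fun w => m 0 + K * ∫ s in (0:ℝ)..w, m s with hv_def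
  have hvc : ContinuousOn v (Icc 0 T) := by
    apply continuousOn_const.add
    apply continuousOn_const.mul
    have hIO : IntegrableOn m (uIcc 0 T) volume := by
      rw [uIcc_of_le hT]
      exact (mc.mono Icc_subset_Ici_self).integrableOn_compact isCompact_Icc
    have := intervalIntegral.continuousOn_primitive_interval (a := 0) (b := T)
      (μ := volume) (f := m) hIO
    rwa [uIcc_of_le hT] at this
  have hv' : ∀ w ∈ Ico (0:ℝ) T, HasDerivWithinAt v (K * m w) (Ici w) w := by
    intro w hw
    have hmeas : StronglyMeasurableAtFilter m (𝓝[>] w) volume := by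
      refine ⟨Ici 0, ?_, mc.aestronglyMeasurable measurableSet_Ici⟩
      exact mem_of_superset self_mem_nhdsWithin fun z hz => le_trans hw.1 (le_of_lt hz)
    have hcw : ContinuousWithinAt m (Ioi w) w :=
      (mc w (mem_Ici.2 hw.1)).mono fun z hz => le_trans hw.1 (le_of_lt hz)
    have hfd := intervalIntegral.integral_hasDerivWithinAt_right (s := Ici w) (t := Ioi w) (mIntOn w hw.1) hmeas hcw
    exact (hfd.const_mul K).const_add (m 0)
  have hgron := norm_le_gronwallBound_of_norm_deriv_right_le (f := v)
    (f' := fun w => K * m w) (δ := m 0) (K := K) (ε := 0) (a := 0) (b := T) hvc hv'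
    (by
      have hval : v 0 = m 0 := by
        simp only [hv_def, intervalIntegral.integral_same, mul_zero, add_zero]
      rw [hval, Real.norm_eq_abs, abs_of_nonneg hm0])
    (by
      intro w hw
      have hvw : m w ≤ v w := hstep w ⟨hw.1, hw.2.le⟩
      have hv0 : 0 ≤ v w := le_trans (hmnn w hw.1) hvw
      rw [Real.norm_eq_abs, Real.norm_eq_abs, abs_of_nonneg (mul_nonneg hK0 (hmnn w hw.1)),
        abs_of_nonneg hv0, add_zero]
      exact mul_le_mul_of_nonneg_left hvw hK0)
  intro t htmem
  have hgt := hgron t htmem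
  rw [sub_zero, gronwallBound_ε0] at hgt
  have h1 : supN r (seg r (x - y) t) ≤ m t := by
    apply supN_le hr
    intro u hu
    exact le_runSup hhc ⟨by linarith [hu.1, htmem.1], by linarith [hu.2, htmem.1]⟩
  have h2 : m t ≤ v t := hstep t htmem
  have h3 : v t ≤ ‖v t‖ := le_abs_self _
  have hm0e : m 0 = supN r (x - y) := rfl
  calc supN r (seg r (x - y) t) ≤ m t := h1
    _ ≤ v t := h2
    _ ≤ ‖v t‖ := h3
    _ ≤ m 0 * Real.exp (K * t) := hgt
    _ = supN r (x - y) * Real.exp (L M * t) := by rw [hm0e, hK_def]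



lemma UGA {r : ℝ} (hr : 0 < r) {f : (ℝ → Vec n) → Vec n} {L : ℝ → ℝ} (hf : GoodRHS r f L)
    (hFC : ∀ x0 : ℝ → Vec n, MemC0 r x0 → ∃ x : ℝ → Vec n, IsSol r f x0 x ⊤)
    (hLS : ∀ ε : ℝ, 0 < ε → ∃ δ : ℝ, 0 < δ ∧ ∀ x0 x : ℝ → Vec n, MemC0 r x0 →
        IsSol r f x0 x ⊤ → supN r x0 ≤ δ → ∀ t : ℝ, 0 ≤ t → supN r (seg r x t) ≤ ε)
    (hGA : ∀ x0 x : ℝ → Vec n, MemC0 r x0 → IsSol r f x0 x ⊤ →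
        Tendsto (fun t => supN r (seg r x t)) atTop (nhds 0))
    (hRFC : ∀ ρ T : ℝ, 0 < ρ → 0 < T → ∃ M : ℝ, ∀ x0 x : ℝ → Vec n, MemC0 r x0 →
        IsSol r f x0 x ⊤ → supN r x0 ≤ ρ → ∀ t ∈ Icc (0:ℝ) T, supN r (seg r x t) ≤ M) :
    ∀ ρ ε : ℝ, 0 < ε → ∃ T : ℝ, 0 ≤ T ∧ ∀ x0 x : ℝ → Vec n, MemC0 r x0 →
      IsSol r f x0 x ⊤ → supN r x0 ≤ ρ → ∀ t : ℝ, T ≤ t → supN r (seg r x t) ≤ ε := by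
  intro ρ ε hε
  obtain ⟨δ, hδ, hLSδ⟩ := hLS ε hε
  set ρ' := max ρ 1 with hρ'def
  have hρ' : 0 < ρ' := lt_of_lt_of_le one_pos (le_max_right _ _)
  obtain ⟨M₀, hM₀⟩ := hRFC ρ' r hρ' hr
  set M₁ := max M₀ 1 with hM₁def
  have hM₁pos : (0:ℝ) < M₁ := lt_of_lt_of_le one_pos (le_max_right _ _)
  have hM₀M₁ : M₀ ≤ M₁ := le_max_left _ _
  set C := L M₁ * M₁ with hCdef
  have hC0 : 0 ≤ C := mul_nonneg (hf.2.2.2.1 M₁) hM₁pos.le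
  have hab : (-r : ℝ) ≤ 0 := by linarith
  -- the predicate of being a solution starting in the ρ'-ball
  set Sol : (ℝ → Vec n) → Prop :=
    fun x => ∃ x0, MemC0 r x0 ∧ IsSol r f x0 x ⊤ ∧ supN r x0 ≤ ρ' with hSoldef
  -- a priori bound on [0, r]
  have hbnd : ∀ x : ℝ → Vec n, Sol x → ∀ w ∈ Icc (0:ℝ) r, supN r (seg r x w) ≤ M₀ := by
    rintro x ⟨x0, hx0, hx, hxρ⟩ w hw
    exact hM₀ x0 x hx0 hx hxρ w hw
  have hptbnd : ∀ x : ℝ → Vec n, Sol x → ∀ w ∈ Icc (0:ℝ) r, ‖x w‖ ≤ M₀ := by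
    intro x hSx w hw
    rcases hSx with ⟨x0, hx0, hx, hxρ⟩
    refine le_trans (norm_le_supN_seg hx.cont hw.1 ⟨by linarith [hw.1], le_refl _⟩) ?_
    exact hbnd x ⟨x0, hx0, hx, hxρ⟩ w hw
  -- Lipschitz estimate on [0, r]
  have hFb : ∀ x : ℝ → Vec n, Sol x → ∀ s ∈ Icc (0:ℝ) r, ‖f (seg r x s)‖ ≤ C := by
    intro x hSx s hs
    rcases hSx with ⟨x0, hx0, hx, hxρ⟩
    have h1 : ‖f (seg r x s)‖ = ‖f (seg r x s) - f 0‖ := by rw [hf.1, sub_zero]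
    rw [h1]
    have h2 := hf.2.2.2.2 M₁ (seg r x s) 0 (memC0_seg hx.cont hs.1)
      continuousOn_const
      (le_trans (hbnd x ⟨x0, hx0, hx, hxρ⟩ s hs) hM₀M₁)
      (supN_le hr fun v _ => by simp only [Pi.zero_apply, norm_zero]; exact hM₁pos.le)
    rw [sub_zero] at h2
    exact le_trans h2 (mul_le_mul_of_nonneg_left
      (le_trans (hbnd x ⟨x0, hx0, hx, hxρ⟩ s hs) hM₀M₁) (hf.2.2.2.1 M₁))
  have hLip : ∀ x : ℝ → Vec n, Sol x → ∀ a b : ℝ, 0 ≤ a → a ≤ b → b ≤ r →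
      ‖x b - x a‖ ≤ C * (b - a) := by
    intro x hSx a b ha hab' hbr
    rcases hSx with ⟨x0, hx0, hx, hxρ⟩
    rw [← integral_sol hr hf hx ha hab']
    have := intervalIntegral.norm_integral_le_of_norm_le_const
      (f := fun s => f (seg r x s)) (a := a) (b := b) (C := C) ?_
    · rwa [abs_of_nonneg (by linarith)] at this
    · intro s hs
      rw [uIoc_of_le hab'] at hs
      exact hFb x ⟨x0, hx0, hx, hxρ⟩ s ⟨by linarith [hs.1], by linarith [hs.2]⟩
  -- the compact space
  haveI : CompactSpace ↥(Icc (-r) (0:ℝ)) := isCompact_iff_compactSpace.mp isCompact_Icc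
  -- the reachable set at time r, as bounded continuous functions
  set A : Set (↥(Icc (-r) (0:ℝ)) →ᵇ Vec n) :=
    {G | ∃ x : ℝ → Vec n, Sol x ∧ ∀ u : ↥(Icc (-r) (0:ℝ)), G u = x (r + ↑u)} with hAdef
  have hmemIci : ∀ u : ↥(Icc (-r) (0:ℝ)), r + (u : ℝ) ∈ Ici (-r) := by
    intro u
    have hu1 := u.2.1
    have hu2 := u.2.2
    simp only [mem_Ici]
    linarith
  have hmemIcc : ∀ u : ↥(Icc (-r) (0:ℝ)), r + (u : ℝ) ∈ Icc (0:ℝ) r := by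
    intro u
    have hu1 := u.2.1
    have hu2 := u.2.2
    exact ⟨by linarith, by linarith⟩
  have hA1 : ∀ G ∈ A, ∀ u : ↥(Icc (-r) (0:ℝ)), ‖G u‖ ≤ M₀ := by
    rintro G ⟨x, hSx, hGx⟩ u
    rw [hGx u]
    exact hptbnd x hSx _ (hmemIcc u)
  have hA2 : ∀ G ∈ A, ∀ u v : ↥(Icc (-r) (0:ℝ)), dist (G u) (G v) ≤ C * dist (u:ℝ) (v:ℝ) := by
    rintro G ⟨x, hSx, hGx⟩ u v
    rw [hGx u, hGx v, dist_eq_norm]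
    rcases le_total (u : ℝ) (v : ℝ) with huv | huv
    · rw [norm_sub_rev]
      have h2 := hLip x hSx (r + u) (r + v) (hmemIcc u).1 (by linarith) (hmemIcc v).2
      rw [Real.dist_eq, abs_sub_comm, abs_of_nonneg (by linarith : (0:ℝ) ≤ ↑v - ↑u)]
      exact le_trans h2 (le_of_eq (by ring))
    · have h2 := hLip x hSx (r + v) (r + u) (hmemIcc v).1 (by linarith) (hmemIcc u).2
      rw [Real.dist_eq, abs_of_nonneg (by linarith : (0:ℝ) ≤ ↑u - ↑v)]
      exact le_trans h2 (le_of_eq (by ring))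
  have hcomp : IsCompact (closure A) := by
    apply BoundedContinuousFunction.arzela_ascoli (Metric.closedBall (0 : Vec n) M₀)
      (isCompact_closedBall _ _) A
    · intro G u hG
      rw [Metric.mem_closedBall, dist_zero_right]
      exact hA1 G hG u
    · intro u₀
      rw [Metric.equicontinuousAt_iff]
      intro ε' hε'
      refine ⟨ε' / (C + 1), div_pos hε' (by linarith), fun v hv G => ?_⟩
      calc dist (G.1 u₀) (G.1 v) ≤ C * dist (u₀:ℝ) (v:ℝ) := hA2 G.1 G.2 u₀ v
        _ = C * dist u₀ v := by rw [Subtype.dist_eq]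
        _ ≤ C * (ε' / (C + 1)) := by
            apply mul_le_mul_of_nonneg_left (le_of_lt ?_) hC0
            rwa [dist_comm]
        _ < ε' := by
            rw [mul_div_assoc']
            rw [div_lt_iff₀ (by linarith)]
            nlinarith
  -- bound on closure
  have hK1 : ∀ G ∈ closure A, ∀ u : ↥(Icc (-r) (0:ℝ)), ‖G u‖ ≤ M₀ := by
    intro G hG u
    have hclosed : IsClosed {H : ↥(Icc (-r) (0:ℝ)) →ᵇ Vec n | ‖H u‖ ≤ M₀} :=
      isClosed_le ((continuous_eval_const u).norm) continuous_const
    exact closure_minimal (fun H hH => hA1 H hH u) hclosed hG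
  -- per-point data on the closure
  have hdata : ∀ G : ↥(closure A), ∃ TG ηG : ℝ, 0 ≤ TG ∧ 0 < ηG ∧
      ∀ y0 y : ℝ → Vec n, MemC0 r y0 → IsSol r f y0 y ⊤ → supN r y0 ≤ M₁ →
        (∀ u : ↥(Icc (-r) (0:ℝ)), ‖y ↑u - (G : ↥(Icc (-r) (0:ℝ)) →ᵇ Vec n) u‖ ≤ ηG) →
        ∀ t : ℝ, TG ≤ t → supN r (seg r y t) ≤ ε := by
    rintro ⟨G, hG⟩
    set x0G : ℝ → Vec n := IccExtend hab ⇑G with hx0Gdef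
    have hx0Gc : Continuous x0G := G.continuous.comp continuous_projIcc
    have hx0GM : supN r x0G ≤ M₁ := by
      apply supN_le hr
      intro u hu
      exact le_trans (hK1 G hG _) hM₀M₁
    obtain ⟨z, hz⟩ := hFC x0G hx0Gc.continuousOn
    have htend := hGA x0G z hx0Gc.continuousOn hz
    rw [Metric.tendsto_atTop] at htend
    obtain ⟨N₀, hN₀⟩ := htend (δ / 2) (by linarith)
    set TG := max N₀ 0 with hTGdef
    have hTG0 : (0:ℝ) ≤ TG := le_max_right _ _
    have hzdec : ∀ τ : ℝ, TG ≤ τ → supN r (seg r z τ) ≤ δ / 2 := by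
      intro τ hτ
      have := hN₀ τ (le_trans (le_max_left _ _) hτ)
      rw [Real.dist_eq, sub_zero] at this
      exact le_of_lt (lt_of_le_of_lt (le_abs_self _) this)
    obtain ⟨M₂, hM₂⟩ := hRFC (M₁ + 1) (TG + 1) (by linarith) (by linarith)
    set K := L M₂ with hKdef
    have hK0 : 0 ≤ K := hf.2.2.2.1 M₂
    set η := min 1 ((δ / 2) * Real.exp (-(K * TG))) with hηdef
    have hη0 : 0 < η := lt_min one_pos (mul_pos (by linarith) (Real.exp_pos _))
    refine ⟨TG, η, hTG0, hη0, ?_⟩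
    intro y0 y hy0 hy hyM₁ hyclose t hts
    -- CD between y and z on [0, TG]
    have hbz : ∀ w ∈ Icc (0:ℝ) TG, supN r (seg r z w) ≤ M₂ := by
      intro w hw
      exact hM₂ x0G z hx0Gc.continuousOn hz (by linarith) w ⟨hw.1, by linarith [hw.2]⟩
    have hbyw : ∀ w ∈ Icc (0:ℝ) TG, supN r (seg r y w) ≤ M₂ := by
      intro w hw
      exact hM₂ y0 y hy0 hy (by linarith) w ⟨hw.1, by linarith [hw.2]⟩
    have hcd := CD hr hf hy hz hTG0 hbyw hbz TG ⟨hTG0, le_refl _⟩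
    have hyz0 : supN r (y - z) ≤ η := by
      apply supN_le hr
      intro u hu
      have hzval : z u = G ⟨u, hu⟩ := by
        have h1 : z u = x0G u := hz.eqOn hu
        rw [h1, hx0Gdef]
        show G (projIcc (-r) 0 hab u) = G ⟨u, hu⟩
        rw [projIcc_of_mem hab hu]
      show ‖y u - z u‖ ≤ η
      rw [hzval]
      exact hyclose ⟨u, hu⟩
    have hcd2 : supN r (seg r (y - z) TG) ≤ δ / 2 := by
      refine le_trans hcd (le_trans (mul_le_mul_of_nonneg_right hyz0 (Real.exp_pos _).le) ?_)
      have hη2 : η ≤ (δ / 2) * Real.exp (-(K * TG)) := min_le_right _ _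
      calc η * Real.exp (K * TG) ≤ ((δ / 2) * Real.exp (-(K * TG))) * Real.exp (K * TG) :=
            mul_le_mul_of_nonneg_right hη2 (Real.exp_pos _).le
        _ = δ / 2 := by rw [mul_assoc, ← Real.exp_add, neg_add_cancel, Real.exp_zero, mul_one]
    -- at time TG, y is within δ
    have hyTG : supN r (seg r y TG) ≤ δ := by
      apply supN_le hr
      intro u hu
      have e : y (TG + u) = z (TG + u) + (y (TG + u) - z (TG + u)) := by abel
      show ‖y (TG + u)‖ ≤ δ
      rw [e]
      refine le_trans (norm_add_le _ _) ?_
      have h1 : ‖z (TG + u)‖ ≤ δ / 2 :=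
        le_trans (le_supN (memC0_seg hz.cont hTG0) hu) (hzdec TG (le_refl _))
      have h2 : ‖y (TG + u) - z (TG + u)‖ ≤ δ / 2 :=
        le_trans (le_supN (memC0_seg (hy.cont.sub hz.cont) hTG0) hu) hcd2
      linarith
    -- stability from time TG on
    have hshift := hy.shift hr hf hTG0
    have hLSres := hLSδ (seg r y TG) (fun τ => y (τ + TG)) (memC0_seg hy.cont hTG0)
      hshift hyTG (t - TG) (by linarith)
    have hsegeq : seg r (fun τ => y (τ + TG)) (t - TG) = seg r y t := by
      funext u
      show y ((t - TG) + u + TG) = y (t + u)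
      congr 1
      ring
    rwa [hsegeq] at hLSres
  choose Tfn etafn hT0 hη0 hP using hdata
  -- finite subcover
  obtain ⟨Gs, hGs⟩ := hcomp.elim_finite_subcover
    (fun G : ↥(closure A) => Metric.ball (G : ↥(Icc (-r) (0:ℝ)) →ᵇ Vec n) (etafn G))
    (fun G => Metric.isOpen_ball)
    (fun G hG => mem_iUnion.2 ⟨⟨G, hG⟩, Metric.mem_ball_self (hη0 ⟨G, hG⟩)⟩)
  set Tmax := ∑ i ∈ Gs, max (Tfn i) 0 with hTmaxdef
  have hTmax0 : 0 ≤ Tmax := Finset.sum_nonneg fun i _ => le_max_right _ _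
  have hTmaxge : ∀ i ∈ Gs, Tfn i ≤ Tmax :=
    fun i hi => le_trans (le_max_left _ _)
      (Finset.single_le_sum (fun j _ => le_max_right (Tfn j) 0) hi)
  refine ⟨r + Tmax, by linarith, ?_⟩
  intro x0 x hx0 hx hxρ t ht
  have hSx : Sol x := ⟨x0, hx0, hx, le_trans hxρ (le_max_left _ _)⟩
  -- the segment of x at time r as a bounded continuous function
  have hGxc : Continuous (fun u : ↥(Icc (-r) (0:ℝ)) => x (r + ↑u)) :=
    hx.cont.comp_continuous (continuous_const.add continuous_subtype_val) hmemIci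
  set Gx : ↥(Icc (-r) (0:ℝ)) →ᵇ Vec n :=
    BoundedContinuousFunction.mkOfCompact ⟨_, hGxc⟩ with hGxdef
  have hGxA : Gx ∈ A := ⟨x, hSx, fun u => rfl⟩
  have hGxcl : Gx ∈ closure A := subset_closure hGxA
  obtain ⟨i, hiGs, hGxball⟩ := mem_iUnion₂.mp (hGs hGxcl)
  -- apply the per-point property to the shifted solution
  have hshift := hx.shift hr hf hr.le
  have happ := hP i (seg r x r) (fun τ => x (τ + r)) (memC0_seg hx.cont hr.le) hshift
    (le_trans (hbnd x hSx r ⟨hr.le, le_refl _⟩) hM₀M₁)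
    (by
      intro u
      have h1 : x (↑u + r) = Gx u := by
        show x (↑u + r) = x (r + ↑u)
        congr 1
        ring
      show ‖x (↑u + r) - (i : ↥(Icc (-r) (0:ℝ)) →ᵇ Vec n) u‖ ≤ etafn i
      rw [h1, ← dist_eq_norm]
      exact le_of_lt (lt_of_le_of_lt (BoundedContinuousFunction.dist_coe_le_dist u)
        (by rwa [Metric.mem_ball] at hGxball)))
    (t - r) (by linarith [hTmaxge i hiGs])
  have hseq : seg r (fun τ => x (τ + r)) (t - r) = seg r x t := by
    funext u
    show x ((t - r) + u + r) = x (t + u)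
    congr 1
    ring
  rwa [hseq] at happ



def bset (r : ℝ) (f : (ℝ → Vec n) → Vec n) (s t : ℝ) : Set ℝ :=
  insert 0 {v | ∃ x0 x : ℝ → Vec n, ∃ τ : ℝ, MemC0 r x0 ∧ IsSol r f x0 x ⊤ ∧
    supN r x0 ≤ s ∧ t ≤ τ ∧ v = supN r (seg r x τ)}

def beta (r : ℝ) (f : (ℝ → Vec n) → Vec n) (s t : ℝ) : ℝ := sSup (bset r f s t)

lemma bset_nonempty (r : ℝ) (f : (ℝ → Vec n) → Vec n) (s t : ℝ) :
    (bset r f s t).Nonempty := ⟨0, mem_insert _ _⟩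

lemma bset_mono_s {r : ℝ} {f : (ℝ → Vec n) → Vec n} {s s' t : ℝ} (hss : s ≤ s') :
    bset r f s t ⊆ bset r f s' t := by
  rintro v (rfl | ⟨x0, x, τ, h1, h2, h3, h4, h5⟩)
  · exact mem_insert _ _
  · exact mem_insert_of_mem _ ⟨x0, x, τ, h1, h2, le_trans h3 hss, h4, h5⟩

lemma bset_anti_t {r : ℝ} {f : (ℝ → Vec n) → Vec n} {s t t' : ℝ} (htt : t ≤ t') :
    bset r f s t' ⊆ bset r f s t := by
  rintro v (rfl | ⟨x0, x, τ, h1, h2, h3, h4, h5⟩)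
  · exact mem_insert _ _
  · exact mem_insert_of_mem _ ⟨x0, x, τ, h1, h2, h3, le_trans htt h4, h5⟩

end DDE

/-- For a forward-complete time-invariant delay system on `C⁰`,
(Lyapunov stability ∧ global attractivity ∧ robust forward completeness) ↔ UGAS. -/
theorem stmt0 (n : ℕ) (hn : 1 ≤ n) (r : ℝ) (hr : 0 < r)
    (f : (ℝ → Vec n) → Vec n) (L : ℝ → ℝ) (hf : GoodRHS r f L)
    (hFC : ∀ x0 : ℝ → Vec n, MemC0 r x0 → ∃ x : ℝ → Vec n, IsSol r f x0 x ⊤) :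
    ((∀ ε : ℝ, 0 < ε → ∃ δ : ℝ, 0 < δ ∧ ∀ x0 x : ℝ → Vec n, MemC0 r x0 →
        IsSol r f x0 x ⊤ → supN r x0 ≤ δ → ∀ t : ℝ, 0 ≤ t → supN r (seg r x t) ≤ ε) ∧
     (∀ x0 x : ℝ → Vec n, MemC0 r x0 → IsSol r f x0 x ⊤ →
        Tendsto (fun t => supN r (seg r x t)) atTop (nhds 0)) ∧
     (∀ ρ T : ℝ, 0 < ρ → 0 < T → ∃ M : ℝ, ∀ x0 x : ℝ → Vec n, MemC0 r x0 →
        IsSol r f x0 x ⊤ → supN r x0 ≤ ρ → ∀ t ∈ Icc (0:ℝ) T, supN r (seg r x t) ≤ M))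
    ↔
    (∃ σ : ℝ → ℝ → ℝ, ClassKL σ ∧ ∀ x0 x : ℝ → Vec n, MemC0 r x0 →
        IsSol r f x0 x ⊤ → ∀ t : ℝ, 0 ≤ t → supN r (seg r x t) ≤ σ (supN r x0) t) := by
  constructor
  · rintro ⟨hLS, hGA, hRFC⟩
    have hUGA := DDE.UGA hr hf hFC hLS hGA hRFC
    have hBd : ∀ s : ℝ, ∃ B : ℝ, 0 ≤ B ∧ ∀ t : ℝ, 0 ≤ t → ∀ v ∈ DDE.bset r f s t, v ≤ B := by
      intro s
      obtain ⟨T₁, hT₁0, hT₁⟩ := hUGA s 1 one_pos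
      obtain ⟨M, hM⟩ := hRFC (max s 1) (T₁ + 1)
        (lt_of_lt_of_le one_pos (le_max_right _ _)) (by linarith)
      refine ⟨max (max M 1) 0, le_max_right _ _, ?_⟩
      rintro t ht v (rfl | ⟨x0, x, τ, h1, h2, h3, h4, h5⟩)
      · exact le_max_right _ _
      · subst h5
        have hτ0 : 0 ≤ τ := le_trans ht h4
        rcases le_total τ (T₁ + 1) with hcase | hcase
        · exact le_trans (hM x0 x h1 h2 (le_trans h3 (le_max_left _ _)) τ ⟨hτ0, hcase⟩)
            (le_trans (le_max_left _ _) (le_max_left _ _))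
        · exact le_trans (hT₁ x0 x h1 h2 h3 τ (by linarith))
            (le_trans (le_max_right M 1) (le_max_left _ _))
    choose Bf hBf0 hBfle using hBd
    have hbddA : ∀ s t : ℝ, 0 ≤ t → BddAbove (DDE.bset r f s t) :=
      fun s t ht => ⟨Bf s, fun v hv => hBfle s t ht v hv⟩
    have hbnn : ∀ s t : ℝ, 0 ≤ t → 0 ≤ DDE.beta r f s t :=
      fun s t ht => le_csSup (hbddA s t ht) (mem_insert _ _)
    have hble : ∀ s t c : ℝ, (∀ v ∈ DDE.bset r f s t, v ≤ c) → DDE.beta r f s t ≤ c :=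
      fun s t c h => csSup_le (DDE.bset_nonempty r f s t) h
    have hbge : ∀ s t v : ℝ, 0 ≤ t → v ∈ DDE.bset r f s t → v ≤ DDE.beta r f s t :=
      fun s t v ht hv => le_csSup (hbddA s t ht) hv
    have hmono : ∀ t : ℝ, 0 ≤ t → Monotone (fun y => DDE.beta r f y t) :=
      fun t ht a b hab => csSup_le_csSup (hbddA b t ht) (DDE.bset_nonempty r f a t)
        (DDE.bset_mono_s hab)
    have hanti : ∀ s t t' : ℝ, 0 ≤ t → t ≤ t' → DDE.beta r f s t' ≤ DDE.beta r f s t :=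
      fun s t t' ht htt => csSup_le_csSup (hbddA s t ht) (DDE.bset_nonempty r f s t')
        (DDE.bset_anti_t htt)
    have hbz : ∀ t : ℝ, 0 ≤ t → DDE.beta r f 0 t = 0 := by
      intro t ht
      refine le_antisymm (hble 0 t 0 ?_) (hbnn 0 t ht)
      rintro v (rfl | ⟨x0, x, τ, h1, h2, h3, h4, h5⟩)
      · exact le_rfl
      · subst h5
        by_contra hcon
        push_neg at hcon
        obtain ⟨δ', hδ'0, hδ'⟩ := hLS (supN r (seg r x τ) / 2) (by linarith)
        have := hδ' x0 x h1 h2 (le_trans h3 (le_of_lt hδ'0)) τ (le_trans ht h4)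
        linarith
    have hbtend : ∀ s : ℝ, Tendsto (fun t => DDE.beta r f s t) atTop (nhds 0) := by
      intro s
      rw [Metric.tendsto_atTop]
      intro ε hε
      obtain ⟨T, hT0, hT⟩ := hUGA s (ε / 2) (by linarith)
      refine ⟨T, ?_⟩
      intro t ht
      have htnn : 0 ≤ t := le_trans hT0 ht
      have hub : DDE.beta r f s t ≤ ε / 2 := by
        apply hble
        rintro v (rfl | ⟨x0, x, τ, h1, h2, h3, h4, h5⟩)
        · linarith
        · subst h5
          exact hT x0 x h1 h2 h3 τ (le_trans ht h4)
      rw [Real.dist_eq, sub_zero, abs_of_nonneg (hbnn s t htnn)]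
      linarith
    have hbsmall : ∀ ε' : ℝ, 0 < ε' → ∃ δ' : ℝ, 0 < δ' ∧ ∀ u : ℝ, u ≤ δ' →
        DDE.beta r f u 0 ≤ ε' := by
      intro ε' hε'
      obtain ⟨δ', hδ'0, hδ'⟩ := hLS ε' hε'
      refine ⟨δ', hδ'0, ?_⟩
      intro u hu
      apply hble
      rintro v (rfl | ⟨x0, x, τ, h1, h2, h3, h4, h5⟩)
      · linarith
      · subst h5
        exact hδ' x0 x h1 h2 (le_trans h3 hu) τ h4
    have hbint : ∀ s t : ℝ, 0 ≤ s → 0 ≤ t → ∀ a b : ℝ,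
        IntervalIntegrable (fun u => DDE.beta r f (s * u) t) volume a b := by
      intro s t hs ht a b
      apply Monotone.intervalIntegrable
      intro u v huv
      exact hmono t ht (mul_le_mul_of_nonneg_left huv hs)
    set σ : ℝ → ℝ → ℝ :=
      fun s t => (∫ u in (2:ℝ)..3, DDE.beta r f (s * u) t) + s * Real.exp (-t) with hσdef
    have hσnn : ∀ s t : ℝ, 0 ≤ s → 0 ≤ t → 0 ≤ σ s t := by
      intro s t hs ht
      have h1 : 0 ≤ ∫ u in (2:ℝ)..3, DDE.beta r f (s * u) t :=
        intervalIntegral.integral_nonneg (by norm_num) (fun u _ => hbnn _ t ht)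
      have h2 : 0 ≤ s * Real.exp (-t) := mul_nonneg hs (Real.exp_pos _).le
      show 0 ≤ (∫ u in (2:ℝ)..3, DDE.beta r f (s * u) t) + s * Real.exp (-t)
      linarith
    have hσub : ∀ s t : ℝ, 0 ≤ s → 0 ≤ t →
        σ s t ≤ DDE.beta r f (3 * s) t + s * Real.exp (-t) := by
      intro s t hs ht
      have h1 : (∫ u in (2:ℝ)..3, DDE.beta r f (s * u) t)
          ≤ ∫ _u in (2:ℝ)..3, DDE.beta r f (3 * s) t := by
        apply intervalIntegral.integral_mono_on (by norm_num) (hbint s t hs ht 2 3)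
          intervalIntegrable_const
        intro u hu
        exact hmono t ht (by nlinarith [hu.2])
      have h2 : (∫ _u in (2:ℝ)..3, DDE.beta r f (3 * s) t) = DDE.beta r f (3 * s) t := by
        rw [intervalIntegral.integral_const]
        norm_num
      show (∫ u in (2:ℝ)..3, DDE.beta r f (s * u) t) + s * Real.exp (-t) ≤ _
      have := le_trans h1 (le_of_eq h2)
      linarith
    have hσlb : ∀ s t : ℝ, 0 ≤ s → 0 ≤ t → DDE.beta r f s t ≤ σ s t := by
      intro s t hs ht
      have h1 : DDE.beta r f s t = ∫ _u in (2:ℝ)..3, DDE.beta r f s t := by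
        rw [intervalIntegral.integral_const]
        norm_num
      have h2 : (∫ _u in (2:ℝ)..3, DDE.beta r f s t)
          ≤ ∫ u in (2:ℝ)..3, DDE.beta r f (s * u) t := by
        apply intervalIntegral.integral_mono_on (by norm_num) intervalIntegrable_const
          (hbint s t hs ht 2 3)
        intro u hu
        exact hmono t ht (by nlinarith [hu.1])
      have h3 : 0 ≤ s * Real.exp (-t) := mul_nonneg hs (Real.exp_pos _).le
      show DDE.beta r f s t ≤ (∫ u in (2:ℝ)..3, DDE.beta r f (s * u) t) + s * Real.exp (-t)
      linarith
    have hσzero : ∀ t : ℝ, 0 ≤ t → σ 0 t = 0 := by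
      intro t ht
      have hz : ∀ u : ℝ, u ∈ uIcc (2:ℝ) 3 → DDE.beta r f ((0:ℝ) * u) t = (0:ℝ) := by
        intro u _
        rw [zero_mul]
        exact hbz t ht
      show (∫ u in (2:ℝ)..3, DDE.beta r f ((0:ℝ) * u) t) + (0:ℝ) * Real.exp (-t) = 0
      rw [intervalIntegral.integral_congr hz]
      simp
    refine ⟨σ, ⟨?_, ?_, ?_⟩, ?_⟩
    · exact fun s t hs ht => hσnn s t hs ht
    · intro t ht
      refine ⟨?_, ?_, hσzero t ht⟩
      · -- continuity in s
        intro s₀ hs₀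
        rcases eq_or_lt_of_le (mem_Ici.1 hs₀) with h0 | hpos
        · -- s₀ = 0
          have h0' : s₀ = 0 := h0.symm
          subst h0'
          rw [Metric.continuousWithinAt_iff]
          intro ε hε
          obtain ⟨δ', hδ'0, hδ'⟩ := hbsmall (ε / 2) (by linarith)
          refine ⟨min (δ' / 3) (ε / 4), by positivity, ?_⟩
          intro s hs hd
          have hs0' : 0 ≤ s := mem_Ici.1 hs
          rw [Real.dist_eq, sub_zero, abs_of_nonneg hs0'] at hd
          rw [Real.dist_eq, hσzero t ht, sub_zero, abs_of_nonneg (hσnn s t hs0' ht)]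
          have hub := hσub s t hs0' ht
          have h1 : DDE.beta r f (3 * s) t ≤ DDE.beta r f (3 * s) 0 := hanti _ 0 t le_rfl ht
          have h2 : DDE.beta r f (3 * s) 0 ≤ ε / 2 := by
            apply hδ'
            have := lt_of_lt_of_le hd (min_le_left _ _)
            linarith
          have h3 : s * Real.exp (-t) ≤ s := by
            have he : Real.exp (-t) ≤ 1 := Real.exp_le_one_iff.2 (by linarith)
            nlinarith
          have h4 : s < ε / 4 := lt_of_lt_of_le hd (min_le_right _ _)
          linarith
        · -- s₀ > 0
          apply ContinuousAt.continuousWithinAt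
          set g : ℝ → ℝ := fun y => DDE.beta r f y t with hgdef
          have hgm : Monotone g := hmono t ht
          have hintg : IntegrableOn g (uIcc (s₀ / 2) (4 * s₀)) volume := by
            rw [uIcc_of_le (by linarith)]
            exact (hgm.monotoneOn _).integrableOn_isCompact isCompact_Icc
          have hHc0 := intervalIntegral.continuousOn_primitive_interval (μ := volume) hintg
          rw [uIcc_of_le (by linarith)] at hHc0
          set H : ℝ → ℝ := fun y => ∫ w in (s₀ / 2)..y, g w with hHdef
          have hHc : ContinuousOn H (Icc (s₀ / 2) (4 * s₀)) := hHc0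
          have hH3 : ContinuousAt (fun s => H (s * 3)) s₀ := by
            have hmem : Icc (s₀ / 2) (4 * s₀) ∈ nhds (s₀ * 3) :=
              Icc_mem_nhds (by linarith) (by linarith)
            exact ContinuousAt.comp (g := H) (f := fun s : ℝ => s * 3)
              (hHc.continuousAt hmem) ((continuous_mul_right 3).continuousAt)
          have hH2 : ContinuousAt (fun s => H (s * 2)) s₀ := by
            have hmem : Icc (s₀ / 2) (4 * s₀) ∈ nhds (s₀ * 2) :=
              Icc_mem_nhds (by linarith) (by linarith)
            exact ContinuousAt.comp (g := H) (f := fun s : ℝ => s * 2)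
              (hHc.continuousAt hmem) ((continuous_mul_right 2).continuousAt)
          have hform : ∀ s ∈ Ioo ((3 / 4) * s₀) ((5 / 4) * s₀),
              σ s t = s⁻¹ * (H (s * 3) - H (s * 2)) + s * Real.exp (-t) := by
            intro s hsU
            have hspos : 0 < s := by nlinarith [hsU.1]
            have hcv : (∫ u in (2:ℝ)..3, g (s * u)) = s⁻¹ • ∫ y in (s * 2)..(s * 3), g y :=
              intervalIntegral.integral_comp_mul_left g (ne_of_gt hspos)
            have hsub : (∫ y in (s * 2)..(s * 3), g y) = H (s * 3) - H (s * 2) :=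
              (intervalIntegral.integral_interval_sub_left
                hgm.intervalIntegrable hgm.intervalIntegrable).symm
            show (∫ u in (2:ℝ)..3, DDE.beta r f (s * u) t) + s * Real.exp (-t) = _
            have hgeq : (∫ u in (2:ℝ)..3, DDE.beta r f (s * u) t)
                = ∫ u in (2:ℝ)..3, g (s * u) := rfl
            rw [hgeq, hcv, hsub, smul_eq_mul]
          have hCArhs : ContinuousAt
              (fun s => s⁻¹ * (H (s * 3) - H (s * 2)) + s * Real.exp (-t)) s₀ := by
            apply ContinuousAt.add
            · exact (continuousAt_id.inv₀ (ne_of_gt hpos)).mul (hH3.sub hH2)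
            · exact (continuous_id.mul continuous_const).continuousAt
          have hUmem : Ioo ((3 / 4) * s₀) ((5 / 4) * s₀) ∈ nhds s₀ :=
            Ioo_mem_nhds (by linarith) (by linarith)
          exact hCArhs.congr (Filter.eventuallyEq_of_mem hUmem hform).symm
      · -- strict mono in s
        intro a ha b hb hab
        have ha' := mem_Ici.1 ha
        have hb' := mem_Ici.1 hb
        have h1 : (∫ u in (2:ℝ)..3, DDE.beta r f (a * u) t)
            ≤ ∫ u in (2:ℝ)..3, DDE.beta r f (b * u) t := by
          apply intervalIntegral.integral_mono_on (by norm_num) (hbint a t ha' ht 2 3)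
            (hbint b t hb' ht 2 3)
          intro u hu
          exact hmono t ht (mul_le_mul_of_nonneg_right hab.le (by linarith [hu.1]))
        have h2 : a * Real.exp (-t) < b * Real.exp (-t) :=
          mul_lt_mul_of_pos_right hab (Real.exp_pos _)
        show (∫ u in (2:ℝ)..3, DDE.beta r f (a * u) t) + a * Real.exp (-t)
          < (∫ u in (2:ℝ)..3, DDE.beta r f (b * u) t) + b * Real.exp (-t)
        linarith
    · intro s hs
      constructor
      · intro t1 ht1 t2 ht2 h12
        have ht1' := mem_Ici.1 ht1
        have h1 : (∫ u in (2:ℝ)..3, DDE.beta r f (s * u) t2)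
            ≤ ∫ u in (2:ℝ)..3, DDE.beta r f (s * u) t1 := by
          apply intervalIntegral.integral_mono_on (by norm_num)
            (hbint s t2 hs (le_trans ht1' h12) 2 3) (hbint s t1 hs ht1' 2 3)
          intro u _
          exact hanti (s * u) t1 t2 ht1' h12
        have h2 : s * Real.exp (-t2) ≤ s * Real.exp (-t1) :=
          mul_le_mul_of_nonneg_left (Real.exp_le_exp.2 (by linarith)) hs
        show (∫ u in (2:ℝ)..3, DDE.beta r f (s * u) t2) + s * Real.exp (-t2)
          ≤ (∫ u in (2:ℝ)..3, DDE.beta r f (s * u) t1) + s * Real.exp (-t1)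
        linarith
      · have hev1 : ∀ᶠ t' in atTop, 0 ≤ σ s t' := by
          filter_upwards [eventually_ge_atTop (0:ℝ)] with t' ht'
          exact hσnn s t' hs ht'
        have hev2 : ∀ᶠ t' in atTop, σ s t' ≤ DDE.beta r f (3 * s) t' + s * Real.exp (-t') := by
          filter_upwards [eventually_ge_atTop (0:ℝ)] with t' ht'
          exact hσub s t' hs ht'
        have hlim : Tendsto (fun t' => DDE.beta r f (3 * s) t' + s * Real.exp (-t'))
            atTop (nhds 0) := by
          have h1 := hbtend (3 * s)
          have h2 : Tendsto (fun t' : ℝ => s * Real.exp (-t')) atTop (nhds 0) := by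
            have := Real.tendsto_exp_neg_atTop_nhds_zero.const_mul s
            rwa [mul_zero] at this
          have := h1.add h2
          rwa [add_zero] at this
        exact squeeze_zero' hev1 hev2 hlim
    · intro x0 x hx0 hx t ht
      have hs0 : 0 ≤ supN r x0 := DDE.supN_nonneg hr hx0
      have hmem : supN r (seg r x t) ∈ DDE.bset r f (supN r x0) t :=
        mem_insert_of_mem _ ⟨x0, x, t, hx0, hx, le_rfl, le_rfl, rfl⟩
      exact le_trans (hbge _ t _ ht hmem) (hσlb _ t hs0 ht)

  · rintro ⟨σ, ⟨hσ0, hσs, hσt⟩, hB⟩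
    refine ⟨?_, ?_, ?_⟩
    · intro ε hε
      have hc0 : σ 0 0 = 0 := (hσs 0 le_rfl).2.2
      have hcw : ContinuousWithinAt (fun s => σ s 0) (Ici 0) 0 :=
        (hσs 0 le_rfl).1 0 self_mem_Ici
      rw [Metric.continuousWithinAt_iff] at hcw
      obtain ⟨δ, hδpos, hδ⟩ := hcw ε hε
      refine ⟨δ / 2, by linarith, ?_⟩
      intro x0 x hx0 hx hsup t ht
      have hs0 : 0 ≤ supN r x0 := DDE.supN_nonneg hr hx0
      have h1 : supN r (seg r x t) ≤ σ (supN r x0) t := hB x0 x hx0 hx t ht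
      have h2 : σ (supN r x0) t ≤ σ (supN r x0) 0 :=
        (hσt (supN r x0) hs0).1 self_mem_Ici (mem_Ici.2 ht) ht
      have h3 : σ (supN r x0) 0 ≤ σ (δ / 2) 0 := by
        rcases eq_or_lt_of_le hsup with he | hl
        · rw [he]
        · exact le_of_lt ((hσs 0 le_rfl).2.1 (mem_Ici.2 hs0) (mem_Ici.2 (by linarith)) hl)
      have h4 : σ (δ / 2) 0 < ε := by
        have hmem : (δ / 2 : ℝ) ∈ Ici (0:ℝ) := mem_Ici.2 (by linarith)
        have hdist : dist (δ / 2 : ℝ) 0 < δ := by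
          rw [Real.dist_eq, sub_zero, abs_of_nonneg (by linarith)]
          linarith
        have := hδ hmem hdist
        rw [Real.dist_eq, hc0, sub_zero] at this
        exact lt_of_le_of_lt (le_abs_self _) this
      linarith
    · intro x0 x hx0 hx
      have hs0 : 0 ≤ supN r x0 := DDE.supN_nonneg hr hx0
      apply squeeze_zero' ?_ ?_ ((hσt (supN r x0) hs0).2)
      · filter_upwards [eventually_ge_atTop (0:ℝ)] with t ht
        exact DDE.supN_nonneg hr (DDE.memC0_seg hx.cont ht)
      · filter_upwards [eventually_ge_atTop (0:ℝ)] with t ht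
        exact hB x0 x hx0 hx t ht
    · intro ρ T hρ hT
      refine ⟨σ ρ 0, ?_⟩
      intro x0 x hx0 hx hsup t htm
      have hs0 : 0 ≤ supN r x0 := DDE.supN_nonneg hr hx0
      have h1 := hB x0 x hx0 hx t htm.1
      have h2 : σ (supN r x0) t ≤ σ (supN r x0) 0 :=
        (hσt _ hs0).1 self_mem_Ici (mem_Ici.2 htm.1) htm.1
      have h3 : σ (supN r x0) 0 ≤ σ ρ 0 := by
        rcases eq_or_lt_of_le hsup with he | hl
        · rw [he]
        · exact le_of_lt ((hσs 0 le_rfl).2.1 (mem_Ici.2 hs0) (mem_Ici.2 hρ.le) hl)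
      linarith
end
end

section
/- Suppose the delay system ẋ(t) = f(x_t) is forward complete on C⁰. Then the following are equivalent: (a) the system satisfies Lyapunov stability (for every ε > 0 there exists δ > 0 such that ‖φ(t,x₀)‖_∞ ≤ ε for all t ≥ 0 and all x₀ ∈ C⁰ with ‖x₀‖_∞ ≤ δ), global attractivity (for every x₀ ∈ C⁰, ‖φ(t,x₀)‖_∞ → 0 as t → ∞), and Lagrange stability (for every ρ > 0 one has sup{‖φ(t,x₀)‖_∞ : t ≥ 0, x₀ ∈ C⁰, ‖x₀‖_∞ ≤ ρ} < ∞); (b) there exists a class-KL function σ such that ‖φ(t,x₀)‖_∞ ≤ σ(‖x₀‖_∞, t) for all t ≥ 0 and all x₀ ∈ C⁰. -/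
open Set MeasureTheory Filter Topology
open scoped ENNReal NNReal

noncomputable section

variable {n : ℕ}

section AuxLemmas

variable {n : ℕ} {r : ℝ} {f : (ℝ → Vec n) → Vec n} {L : ℝ → ℝ}

lemma supN_nonneg (hr : 0 ≤ r) (g : ℝ → Vec n) : 0 ≤ supN r g := by
  by_cases h : BddAbove ((fun s => ‖g s‖) '' Icc (-r) 0)
  · have h0 : (0:ℝ) ∈ Icc (-r) 0 := ⟨by linarith, le_refl 0⟩
    exact le_trans (norm_nonneg _) (le_csSup h ⟨0, h0, rfl⟩)
  · simp only [supN, Real.sSup_of_not_bddAbove h]; exact le_refl 0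

lemma supN_le (hr : 0 ≤ r) {g : ℝ → Vec n} {C : ℝ}
    (h : ∀ s ∈ Icc (-r) 0, ‖g s‖ ≤ C) : supN r g ≤ C := by
  apply csSup_le (Set.Nonempty.image _ (nonempty_Icc.2 (by linarith)))
  rintro c ⟨s, hs, rfl⟩; exact h s hs

lemma norm_le_supN {g : ℝ → Vec n} (hg : MemC0 r g) {s : ℝ} (hs : s ∈ Icc (-r) 0) :
    ‖g s‖ ≤ supN r g := by
  refine le_csSup ?_ ⟨s, hs, rfl⟩
  exact (isCompact_Icc.image_of_continuousOn hg.norm).bddAbove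

lemma supN_zero (hr : 0 ≤ r) : supN r (0 : ℝ → Vec n) = 0 :=
  le_antisymm (supN_le hr (by simp)) (supN_nonneg hr 0)

lemma supN_le_add (hr : 0 ≤ r) {g h : ℝ → Vec n} (hh : MemC0 r h) {ε : ℝ}
    (hgh : ∀ u ∈ Icc (-r) 0, ‖g u‖ ≤ ‖h u‖ + ε) : supN r g ≤ supN r h + ε :=
  supN_le hr fun u hu => le_trans (hgh u hu) (by linarith [norm_le_supN hh hu])

lemma seg_add (x : ℝ → Vec n) (a t : ℝ) :
    seg r (fun u => x (a + u)) t = seg r x (a + t) := by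
  funext s; simp only [seg, add_assoc]

lemma IsSol.contOn {x0 x : ℝ → Vec n} (hx : IsSol r f x0 x ⊤) :
    ContinuousOn x (Ici (-r)) := by
  have h : {t : ℝ | -r ≤ t ∧ ENNReal.ofReal t < ⊤} = Ici (-r) := by
    ext t; simp [ENNReal.ofReal_lt_top]
  rw [← h]; exact hx.1

lemma segMemC0 {x : ℝ → Vec n} (hx : ContinuousOn x (Ici (-r))) {t : ℝ} (ht : 0 ≤ t) :
    MemC0 r (seg r x t) :=
  hx.comp ((continuous_const.add continuous_id).continuousOn)
    (fun s hs => by simp only [mem_Ici]; have := hs.1; linarith)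

lemma exists_traj_bound (hr : 0 ≤ r) {x : ℝ → Vec n} (hx : ContinuousOn x (Ici (-r)))
    (T : ℝ) : ∃ C : ℝ, 0 ≤ C ∧ ∀ u ∈ Icc (-r) T, ‖x u‖ ≤ C := by
  obtain ⟨C, hC⟩ := (isCompact_Icc (a := -r) (b := T)).exists_bound_of_continuousOn
    (hx.mono (fun u hu => hu.1))
  exact ⟨max C 0, le_max_right _ _, fun u hu => le_trans (hC u hu) (le_max_left _ _)⟩

lemma supN_seg_le (hr : 0 ≤ r) {x : ℝ → Vec n} {C T : ℝ}
    (hC : ∀ u ∈ Icc (-r) T, ‖x u‖ ≤ C) {t : ℝ} (ht : 0 ≤ t) (htT : t ≤ T) :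
    supN r (seg r x t) ≤ C :=
  supN_le hr fun s hs => hC (t + s) ⟨by linarith [hs.1], by linarith [hs.2]⟩

lemma f_norm_le (hr : 0 ≤ r) (hf : GoodRHS r f L) {g : ℝ → Vec n} (hg : MemC0 r g)
    {M : ℝ} (hgM : supN r g ≤ M) : ‖f g‖ ≤ L M * M := by
  have h0 : MemC0 r (0 : ℝ → Vec n) := continuousOn_const
  have hM0 : (0:ℝ) ≤ M := le_trans (supN_nonneg hr g) hgM
  have h2 := hf.2.2.2.2 M g 0 hg h0 hgM (by rw [supN_zero hr]; exact hM0)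
  rw [hf.1, sub_zero, sub_zero] at h2
  exact le_trans h2 (mul_le_mul_of_nonneg_left hgM (hf.2.2.2.1 M))

end AuxLemmas


section AuxLemmas2

variable {n : ℕ} {r : ℝ} {f : (ℝ → Vec n) → Vec n} {L : ℝ → ℝ}

lemma fseg_contOn (hr : 0 < r) (hf : GoodRHS r f L) {x : ℝ → Vec n}
    (hx : ContinuousOn x (Ici (-r))) :
    ContinuousOn (fun t => f (seg r x t)) (Ici 0) := by
  intro t₀ ht₀
  have ht₀' : (0:ℝ) ≤ t₀ := ht₀
  obtain ⟨C, hC0, hC⟩ := exists_traj_bound hr.le hx (t₀ + 1)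
  have hu : UniformContinuousOn x (Icc (-r) (t₀+1)) :=
    isCompact_Icc.uniformContinuousOn_of_continuous (hx.mono (fun u hu => hu.1))
  rw [Metric.continuousWithinAt_iff]
  intro ε hε
  set K := L C with hKdef
  have hK0 : 0 ≤ K := hf.2.2.2.1 C
  have hε' : 0 < ε / (K + 1) := by positivity
  obtain ⟨δ₀, hδ₀, hδ⟩ := (Metric.uniformContinuousOn_iff).1 hu (ε / (K+1)) hε'
  refine ⟨min δ₀ 1, by positivity, ?_⟩
  intro t ht hdist
  have ht' : (0:ℝ) ≤ t := ht
  have htt₀ : |t - t₀| < min δ₀ 1 := by rwa [Real.dist_eq] at hdist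
  have ht1 : t ≤ t₀ + 1 := by
    have := abs_lt.1 (lt_of_lt_of_le htt₀ (min_le_right _ _)); linarith [this.1, this.2]
  have hmem : ∀ u ∈ Icc (-r) (0:ℝ), t + u ∈ Icc (-r) (t₀+1) :=
    fun u hu => ⟨by linarith [hu.1], by linarith [hu.2]⟩
  have hmem₀ : ∀ u ∈ Icc (-r) (0:ℝ), t₀ + u ∈ Icc (-r) (t₀+1) :=
    fun u hu => ⟨by linarith [hu.1], by linarith [hu.2]⟩
  have hsupd : supN r (seg r x t - seg r x t₀) ≤ ε / (K+1) := by
    apply supN_le hr.le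
    intro u hu
    have := hδ (t + u) (hmem u hu) (t₀ + u) (hmem₀ u hu)
      (by rw [Real.dist_eq]; simpa using htt₀.trans_le (min_le_left _ _))
    rw [dist_eq_norm] at this
    exact le_of_lt this
  have hsx : supN r (seg r x t) ≤ C := supN_seg_le hr.le hC ht' ht1
  have hsx₀ : supN r (seg r x t₀) ≤ C := supN_seg_le hr.le hC ht₀' (by linarith)
  have hlip := hf.2.2.2.2 C (seg r x t) (seg r x t₀) (segMemC0 hx ht') (segMemC0 hx ht₀')
    hsx hsx₀
  rw [dist_eq_norm]
  calc ‖f (seg r x t) - f (seg r x t₀)‖ ≤ K * supN r (seg r x t - seg r x t₀) := hlip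
    _ ≤ K * (ε / (K+1)) := by
        apply mul_le_mul_of_nonneg_left hsupd hK0
    _ < ε := by
        rw [mul_div_assoc']
        rw [div_lt_iff₀ (by linarith)]
        nlinarith

lemma fseg_intble (hr : 0 < r) (hf : GoodRHS r f L) {x : ℝ → Vec n}
    (hx : ContinuousOn x (Ici (-r))) {a b : ℝ} (ha : 0 ≤ a) (hb : 0 ≤ b) :
    IntervalIntegrable (fun s => f (seg r x s)) volume a b := by
  apply ContinuousOn.intervalIntegrable
  apply (fseg_contOn hr hf hx).mono
  intro u hu
  rcases le_total a b with h | h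
  · rw [uIcc_of_le h] at hu; exact le_trans ha hu.1
  · rw [uIcc_of_ge h] at hu; exact le_trans hb hu.1

lemma sol_eqn {x0 x : ℝ → Vec n} (hx : IsSol r f x0 x ⊤) (t : ℝ) (ht : 0 ≤ t) :
    x t = x 0 + ∫ s in (0:ℝ)..t, f (seg r x s) :=
  hx.2.2 t ht (by simp [ENNReal.ofReal_lt_top])

lemma sol_diff (hr : 0 < r) (hf : GoodRHS r f L) {x0 x : ℝ → Vec n}
    (hx : IsSol r f x0 x ⊤) {a b : ℝ} (ha : 0 ≤ a) (hb : 0 ≤ b) :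
    x b - x a = ∫ s in a..b, f (seg r x s) := by
  rw [sol_eqn hx b hb, sol_eqn hx a ha]
  rw [add_sub_add_left_eq_sub]
  exact intervalIntegral.integral_interval_sub_left
    (fseg_intble hr hf hx.contOn le_rfl hb) (fseg_intble hr hf hx.contOn le_rfl ha)

lemma sol_lip (hr : 0 < r) (hf : GoodRHS r f L) {x0 x : ℝ → Vec n}
    (hx : IsSol r f x0 x ⊤) {M T : ℝ} (hM : ∀ u ∈ Icc (-r) T, ‖x u‖ ≤ M)
    {a b : ℝ} (ha : 0 ≤ a) (hb : 0 ≤ b) (haT : a ≤ T) (hbT : b ≤ T) :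
    ‖x b - x a‖ ≤ L M * M * |b - a| := by
  rw [sol_diff hr hf hx ha hb]
  apply intervalIntegral.norm_integral_le_of_norm_le_const
  intro s hs
  rw [uIoc_eq_union] at hs
  have hs0 : 0 ≤ s ∧ s ≤ T := by
    rcases hs with h | h
    · exact ⟨le_trans ha h.1.le, le_trans h.2 hbT⟩
    · exact ⟨le_trans hb h.1.le, le_trans h.2 haT⟩
  exact f_norm_le hr.le hf (segMemC0 hx.contOn hs0.1) (supN_seg_le hr.le hM hs0.1 hs0.2)

end AuxLemmas2


section AuxLemmas3

variable {n : ℕ} {r : ℝ} {f : (ℝ → Vec n) → Vec n} {L : ℝ → ℝ}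

lemma segSup_contOn (hr : 0 < r) {z : ℝ → Vec n} (hz : ContinuousOn z (Ici (-r))) :
    ContinuousOn (fun t => supN r (seg r z t)) (Ici 0) := by
  intro t₀ ht₀
  have ht₀' : (0:ℝ) ≤ t₀ := ht₀
  have hu : UniformContinuousOn z (Icc (-r) (t₀+1)) :=
    isCompact_Icc.uniformContinuousOn_of_continuous (hz.mono (fun u hu => hu.1))
  rw [Metric.continuousWithinAt_iff]
  intro ε hε
  obtain ⟨δ₀, hδ₀, hδ⟩ := (Metric.uniformContinuousOn_iff).1 hu (ε/2) (by positivity)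
  refine ⟨min δ₀ 1, by positivity, ?_⟩
  intro t ht hdist
  have ht' : (0:ℝ) ≤ t := ht
  have htt₀ : |t - t₀| < min δ₀ 1 := by rwa [Real.dist_eq] at hdist
  have ht1 : t ≤ t₀ + 1 := by
    have := abs_lt.1 (lt_of_lt_of_le htt₀ (min_le_right _ _)); linarith [this.1, this.2]
  have hmem : ∀ u ∈ Icc (-r) (0:ℝ), t + u ∈ Icc (-r) (t₀+1) :=
    fun u hu => ⟨by linarith [hu.1], by linarith [hu.2]⟩
  have hmem₀ : ∀ u ∈ Icc (-r) (0:ℝ), t₀ + u ∈ Icc (-r) (t₀+1) :=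
    fun u hu => ⟨by linarith [hu.1], by linarith [hu.2]⟩
  have key : ∀ u ∈ Icc (-r) (0:ℝ), ‖z (t+u) - z (t₀+u)‖ ≤ ε/2 := by
    intro u hu
    have := hδ (t + u) (hmem u hu) (t₀ + u) (hmem₀ u hu)
      (by rw [Real.dist_eq]; simpa using htt₀.trans_le (min_le_left _ _))
    rw [dist_eq_norm] at this
    exact this.le
  have h1 : supN r (seg r z t) ≤ supN r (seg r z t₀) + ε/2 := by
    apply supN_le_add hr.le (segMemC0 hz ht₀')
    intro u hu
    calc ‖seg r z t u‖ = ‖z (t₀+u) + (z (t+u) - z (t₀+u))‖ := by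
          simp [seg, add_sub_cancel]
      _ ≤ ‖z (t₀+u)‖ + ‖z (t+u) - z (t₀+u)‖ := norm_add_le _ _
      _ ≤ ‖seg r z t₀ u‖ + ε/2 := by
          have := key u hu; simp only [seg]; linarith
  have h2 : supN r (seg r z t₀) ≤ supN r (seg r z t) + ε/2 := by
    apply supN_le_add hr.le (segMemC0 hz ht')
    intro u hu
    calc ‖seg r z t₀ u‖ = ‖z (t+u) + (z (t₀+u) - z (t+u))‖ := by
          simp [seg, add_sub_cancel]
      _ ≤ ‖z (t+u)‖ + ‖z (t₀+u) - z (t+u)‖ := norm_add_le _ _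
      _ ≤ ‖seg r z t u‖ + ε/2 := by
          have := key u hu; rw [norm_sub_rev] at this; simp only [seg]; linarith
  rw [Real.dist_eq, abs_sub_lt_iff]
  exact ⟨by linarith, by linarith⟩

lemma gronwall_sol (hr : 0 < r) (hf : GoodRHS r f L)
    {x0 y0 x y : ℝ → Vec n} (hx : IsSol r f x0 x ⊤) (hy : IsSol r f y0 y ⊤)
    {T M : ℝ}
    (hxM : ∀ t ∈ Icc (0:ℝ) T, supN r (seg r x t) ≤ M)
    (hyM : ∀ t ∈ Icc (0:ℝ) T, supN r (seg r y t) ≤ M) :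
    ∀ t ∈ Icc (0:ℝ) T,
      supN r (seg r (x - y) t) ≤ supN r (seg r (x - y) 0) * Real.exp (L M * t) := by
  rcases le_or_gt T 0 with hT | hT
  · intro t ht
    have : t = 0 := le_antisymm (le_trans ht.2 hT) ht.1
    subst this
    simp only [mul_zero, Real.exp_zero, mul_one, le_refl]
  intro t htmem
  set K := L M with hK
  have hK0 : 0 ≤ K := hf.2.2.2.1 M
  have hzc : ContinuousOn (fun u => x u - y u) (Ici (-r)) := hx.contOn.sub hy.contOn
  set g : ℝ → ℝ := fun t => supN r (seg r (x - y) t) with hgdef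
  have hgz : (x - y : ℝ → Vec n) = fun u => x u - y u := rfl
  have hgc : ContinuousOn g (Ici 0) := by
    rw [hgdef, hgz]; exact segSup_contOn hr hzc
  have hgnn : ∀ s : ℝ, 0 ≤ g s := fun s => supN_nonneg hr.le _
  have hgint : ∀ a b : ℝ, 0 ≤ a → 0 ≤ b → IntervalIntegrable g volume a b := by
    intro a b ha hb
    apply ContinuousOn.intervalIntegrable
    apply hgc.mono
    intro u hu
    rcases le_total a b with h | h
    · rw [uIcc_of_le h] at hu; exact le_trans ha hu.1
    · rw [uIcc_of_ge h] at hu; exact le_trans hb hu.1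
  -- z bound in terms of g 0 for arguments in [-r,0]
  have hz0 : ∀ v ∈ Icc (-r) (0:ℝ), ‖x v - y v‖ ≤ g 0 := by
    intro v hv
    have h1 : ‖seg r (x - y) 0 v‖ ≤ g 0 := norm_le_supN (segMemC0 (by rw [← hgz] at hzc; exact hzc) le_rfl) hv
    simpa [seg] using h1
  -- pointwise integral inequality
  have key : ∀ s ∈ Icc (0:ℝ) T, g s ≤ g 0 + K * ∫ u in (0:ℝ)..s, g u := by
    intro s hs
    have hint0 : 0 ≤ ∫ u in (0:ℝ)..s, g u :=
      intervalIntegral.integral_nonneg hs.1 (fun u _ => hgnn u)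
    apply supN_le hr.le
    intro u hu
    have hsu : s + u ∈ Icc (-r) s := ⟨by linarith [hu.1, hs.1], by linarith [hu.2]⟩
    rcases le_or_gt (s + u) 0 with hc | hc
    · have : ‖x (s+u) - y (s+u)‖ ≤ g 0 := hz0 _ ⟨hsu.1, hc⟩
      have h2 : ‖seg r (x - y) s u‖ = ‖x (s+u) - y (s+u)‖ := by simp [seg]
      rw [h2]; nlinarith
    · -- integral equation case
      have hdx := sol_diff hr hf hx (le_refl 0) hc.le
      have hdy := sol_diff hr hf hy (le_refl 0) hc.le
      have hxint := fseg_intble hr hf hx.contOn (le_refl 0) hc.le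
      have hyint := fseg_intble hr hf hy.contOn (le_refl 0) hc.le
      have hzeq : x (s+u) - y (s+u) = (x 0 - y 0) +
          ∫ v in (0:ℝ)..(s+u), (f (seg r x v) - f (seg r y v)) := by
        rw [intervalIntegral.integral_sub hxint hyint, ← hdx, ← hdy]; abel
      have hbound : ∀ v ∈ Icc (0:ℝ) (s+u), ‖f (seg r x v) - f (seg r y v)‖ ≤ K * g v := by
        intro v hv
        have hv0 : (0:ℝ) ≤ v := hv.1
        have hvT : v ≤ T := by linarith [hv.2, hu.2, hs.2]
        have := hf.2.2.2.2 M (seg r x v) (seg r y v) (segMemC0 hx.contOn hv0)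
          (segMemC0 hy.contOn hv0) (hxM v ⟨hv0, hvT⟩) (hyM v ⟨hv0, hvT⟩)
        have heq : seg r x v - seg r y v = seg r (x - y) v := by funext w; simp [seg]
        rwa [heq] at this
      have hintnn : 0 ≤ ∫ v in (0:ℝ)..(s+u), K * g v :=
        intervalIntegral.integral_nonneg hc.le (fun v _ => mul_nonneg hK0 (hgnn v))
      have hnormint : ‖∫ v in (0:ℝ)..(s+u), (f (seg r x v) - f (seg r y v))‖ ≤
          ∫ v in (0:ℝ)..(s+u), K * g v := by
        have h4 := intervalIntegral.norm_integral_le_of_norm_le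
          (f := fun v => f (seg r x v) - f (seg r y v)) (g := fun v => K * g v)
          (μ := volume) (a := 0) (b := s+u) hc.le ?_ ((hgint 0 (s+u) le_rfl hc.le).const_mul K)
        · exact h4
        · apply Filter.Eventually.of_forall
          intro v hv
          exact hbound v ⟨hv.1.le, hv.2⟩
      have hmono : ∫ v in (0:ℝ)..(s+u), K * g v ≤ ∫ v in (0:ℝ)..s, K * g v := by
        apply intervalIntegral.integral_mono_interval (le_refl (0:ℝ)) hc.le (by linarith [hu.2])
        · exact Filter.Eventually.of_forall (fun v => mul_nonneg hK0 (hgnn v))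
        · exact (hgint 0 s le_rfl hs.1).const_mul K
      have h2 : ‖seg r (x - y) s u‖ = ‖x (s+u) - y (s+u)‖ := by simp [seg]
      rw [h2, hzeq]
      calc ‖(x 0 - y 0) + ∫ v in (0:ℝ)..(s+u), (f (seg r x v) - f (seg r y v))‖
          ≤ ‖x 0 - y 0‖ + ‖∫ v in (0:ℝ)..(s+u), (f (seg r x v) - f (seg r y v))‖ :=
            norm_add_le _ _
        _ ≤ g 0 + ∫ v in (0:ℝ)..s, K * g v := by
            have h3 : ‖x 0 - y 0‖ ≤ g 0 := hz0 0 ⟨by linarith, le_rfl⟩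
            linarith [hnormint.trans hmono]
        _ = g 0 + K * ∫ v in (0:ℝ)..s, g v := by
            rw [intervalIntegral.integral_const_mul]
  -- Gronwall
  set G : ℝ → ℝ := fun s => g 0 + K * ∫ u in (0:ℝ)..s, g u with hGdef
  have hGnn : ∀ s ∈ Icc (0:ℝ) T, 0 ≤ G s := by
    intro s hs
    have : 0 ≤ ∫ u in (0:ℝ)..s, g u :=
      intervalIntegral.integral_nonneg hs.1 (fun u _ => hgnn u)
    have := hgnn 0; simp only [hGdef]; nlinarith
  have hGc : ContinuousOn G (Icc 0 T) := by
    have hi : IntegrableOn g (uIcc 0 T) := by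
      rw [uIcc_of_le hT.le]
      exact (hgc.mono (fun u hu => hu.1)).integrableOn_Icc
    have := intervalIntegral.continuousOn_primitive_interval hi
    rw [uIcc_of_le hT.le] at this
    exact continuousOn_const.add (continuousOn_const.mul this)
  have hG' : ∀ s ∈ Ico (0:ℝ) T, HasDerivWithinAt G (K * g s) (Ici s) s := by
    intro s hs
    have hmeasat : StronglyMeasurableAtFilter g (nhdsWithin s (Ioi s)) volume := by
      refine ⟨Ici 0, ?_, hgc.aestronglyMeasurable measurableSet_Ici⟩
      exact mem_of_superset self_mem_nhdsWithin (fun u hu => le_trans hs.1 (le_of_lt hu))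
    have hcw : ContinuousWithinAt g (Ioi s) s :=
      (hgc s hs.1).mono (fun u hu => le_trans hs.1 (le_of_lt hu))
    have hprim : HasDerivWithinAt (fun u => ∫ v in (0:ℝ)..u, g v) (g s) (Ici s) s :=
      intervalIntegral.integral_hasDerivWithinAt_right (hgint 0 s le_rfl hs.1) hmeasat hcw
    exact (hprim.const_mul K).const_add (g 0)
  have hGa : ‖G 0‖ ≤ g 0 := by
    have h5 : G 0 = g 0 := by simp [hGdef]
    rw [h5, Real.norm_of_nonneg (hgnn 0)]
  have hGbound : ∀ s ∈ Ico (0:ℝ) T, ‖K * g s‖ ≤ K * ‖G s‖ + 0 := by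
    intro s hs
    have h6 : g s ≤ G s := key s ⟨hs.1, hs.2.le⟩
    rw [Real.norm_of_nonneg (mul_nonneg hK0 (hgnn s)), Real.norm_of_nonneg (hGnn s ⟨hs.1, hs.2.le⟩)]
    nlinarith [hgnn s]
  have hGron := norm_le_gronwallBound_of_norm_deriv_right_le hGc hG' hGa hGbound t htmem
  rw [gronwallBound_ε0, sub_zero, Real.norm_of_nonneg (hGnn t htmem)] at hGron
  exact le_trans (key t htmem) hGron

end AuxLemmas3


section AuxLemmas4

variable {n : ℕ} {r : ℝ} {f : (ℝ → Vec n) → Vec n} {L : ℝ → ℝ}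

lemma sol_shift (hr : 0 < r) (hf : GoodRHS r f L) {x0 x : ℝ → Vec n}
    (hx : IsSol r f x0 x ⊤) {a : ℝ} (ha : 0 ≤ a) :
    IsSol r f (seg r x a) (fun t => x (a + t)) ⊤ := by
  refine ⟨?_, ?_, ?_⟩
  · apply hx.contOn.comp (f := fun t => a + t)
      ((continuous_const.add continuous_id).continuousOn)
    intro t ht
    have : -r ≤ t := ht.1
    simp only [mem_Ici]; linarith
  · intro t _; rfl
  · intro t ht _
    have hd := sol_diff hr hf hx ha (by linarith : (0:ℝ) ≤ a + t)
    have hshift : (∫ s in (0:ℝ)..t, f (seg r (fun u => x (a + u)) s))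
        = ∫ s in a..(a+t), f (seg r x s) := by
      have h1 : (fun s => f (seg r (fun u => x (a + u)) s))
          = fun s => f (seg r x (a + s)) := by
        funext s; rw [seg_add]
      rw [h1]
      have h2 := intervalIntegral.integral_comp_add_left (a := (0:ℝ)) (b := t)
        (fun s => f (seg r x s)) a
      rw [add_zero] at h2
      exact h2
    simp only [add_zero]
    rw [hshift, ← hd]
    abel

lemma arzela_extract (hr : 0 < r) {K M : ℝ} (hK : 0 ≤ K)
    (g : ℕ → ℝ → Vec n)
    (hb : ∀ k, ∀ u ∈ Icc (-r) (0:ℝ), ‖g k u‖ ≤ M)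
    (hl : ∀ k, ∀ u ∈ Icc (-r) (0:ℝ), ∀ v ∈ Icc (-r) (0:ℝ), ‖g k u - g k v‖ ≤ K * |u - v|) :
    ∃ (y : ℝ → Vec n) (φ : ℕ → ℕ), StrictMono φ ∧ MemC0 r y ∧
      (∀ u ∈ Icc (-r) (0:ℝ), ‖y u‖ ≤ M) ∧
      (∀ ε : ℝ, 0 < ε → ∃ N : ℕ, ∀ k ≥ N, ∀ u ∈ Icc (-r) (0:ℝ), ‖g (φ k) u - y u‖ ≤ ε) := by
  classical
  set I := Icc (-r) (0:ℝ)
  have hrle : -r ≤ (0:ℝ) := by linarith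
  set K' : NNReal := Real.toNNReal K with hK'
  have hKK : (K' : ℝ) = K := Real.coe_toNNReal K hK
  -- continuous maps
  have hlip : ∀ k, LipschitzWith K' (fun u : I => g k u.1) := by
    intro k
    apply LipschitzWith.of_dist_le_mul
    intro u v
    rw [Subtype.dist_eq, dist_eq_norm, dist_eq_norm, hKK]
    exact hl k u.1 u.2 v.1 v.2
  set G : ℕ → C(I, Vec n) := fun k => ⟨fun u => g k u.1, (hlip k).continuous⟩ with hG
  set S : Set C(I, Vec n) :=
    {h | (∀ u : I, ‖h u‖ ≤ M) ∧ LipschitzWith K' (h : I → Vec n)} with hS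
  have hGS : ∀ k, G k ∈ S := fun k => ⟨fun u => hb k u.1 u.2, hlip k⟩
  -- compactness of S
  have hScpt : IsCompact S := by
    apply ArzelaAscoli.isCompact_of_equicontinuous
    · -- pointwise compactness
      have himg : (ContinuousMap.toFun '' S) =
          {h : I → Vec n | (∀ u : I, ‖h u‖ ≤ M) ∧ LipschitzWith K' h} := by
        ext h
        constructor
        · rintro ⟨h0, hh0, rfl⟩; exact hh0
        · rintro ⟨h1, h2⟩
          exact ⟨⟨h, h2.continuous⟩, ⟨h1, h2⟩, rfl⟩
      have hcl1 : IsClosed {h : I → Vec n | ∀ u : I, ‖h u‖ ≤ M} := by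
        have he : {h : I → Vec n | ∀ u : I, ‖h u‖ ≤ M} =
            ⋂ u : I, {h : I → Vec n | ‖h u‖ ≤ M} := by ext h; simp [Set.mem_iInter]
        rw [he]
        exact isClosed_iInter (fun u =>
          isClosed_le ((continuous_apply u).norm) continuous_const)
      have hcl2 : IsClosed {h : I → Vec n | LipschitzWith K' h} := by
        have he : {h : I → Vec n | LipschitzWith K' h} =
            ⋂ (u : I) (v : I), {h : I → Vec n | dist (h u) (h v) ≤ K' * dist u v} := by
          ext h
          simp only [Set.mem_iInter, Set.mem_setOf_eq]
          exact ⟨fun hh u v => hh.dist_le_mul u v, fun hh => LipschitzWith.of_dist_le_mul hh⟩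
        rw [he]
        exact isClosed_iInter (fun u => isClosed_iInter (fun v =>
          isClosed_le ((continuous_apply u).dist (continuous_apply v)) continuous_const))
      have himg2 : (ContinuousMap.toFun '' S) =
          {h : I → Vec n | ∀ u : I, ‖h u‖ ≤ M} ∩ {h : I → Vec n | LipschitzWith K' h} := by
        rw [himg]; exact Set.setOf_and
      rw [himg2]
      apply IsCompact.of_isClosed_subset
        (isCompact_univ_pi (fun u => isCompact_closedBall (0 : Vec n) M))
        (hcl1.inter hcl2)
      intro h hh
      rw [Set.mem_univ_pi]
      intro u
      rw [Metric.mem_closedBall, dist_zero_right]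
      exact hh.1 u
    · -- equicontinuity
      apply Metric.equicontinuous_of_continuity_modulus (fun d => K * d)
      · have : Tendsto (fun d : ℝ => K * d) (nhds 0) (nhds (K * 0)) :=
          (continuous_const.mul continuous_id).tendsto 0
        simpa using this
      · rintro u v ⟨h, hhS⟩
        rw [← hKK]
        exact (hhS.2.dist_le_mul u v)
  obtain ⟨h, hhS, φ, hφ, htend⟩ := hScpt.tendsto_subseq (fun k => hGS k)
  set y : ℝ → Vec n := fun u => h (Set.projIcc (-r) 0 hrle u) with hy
  refine ⟨y, φ, hφ, ?_, ?_, ?_⟩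
  · exact (h.continuous.comp (continuous_projIcc)).continuousOn
  · intro u hu
    have hpr : projIcc (-r) 0 hrle u = ⟨u, hu⟩ := projIcc_of_mem hrle hu
    have : y u = h ⟨u, hu⟩ := by simp only [hy, hpr]
    rw [this]; exact hhS.1 _
  · intro ε hε
    obtain ⟨N, hN⟩ := (Metric.tendsto_atTop.1 htend) ε hε
    refine ⟨N, fun k hk u hu => ?_⟩
    have hpr : projIcc (-r) 0 hrle u = ⟨u, hu⟩ := projIcc_of_mem hrle hu
    have h1 : y u = h ⟨u, hu⟩ := by simp only [hy, hpr]
    have h2 : g (φ k) u = (G (φ k)) ⟨u, hu⟩ := rfl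
    rw [h1, h2, ← dist_eq_norm]
    exact le_trans (ContinuousMap.dist_apply_le_dist _) (le_of_lt (hN k hk))

end AuxLemmas4


section AuxLemmas5

variable {n : ℕ} {r : ℝ} {f : (ℝ → Vec n) → Vec n} {L : ℝ → ℝ}

lemma traj_pt_bound (hr : 0 < r) {x : ℝ → Vec n} (hx : ContinuousOn x (Ici (-r)))
    {M : ℝ} (hM : ∀ t : ℝ, 0 ≤ t → supN r (seg r x t) ≤ M) :
    ∀ u : ℝ, -r ≤ u → ‖x u‖ ≤ M := by
  intro u hu
  rcases le_or_gt u 0 with h | h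
  · have h1 : ‖seg r x 0 u‖ ≤ supN r (seg r x 0) :=
      norm_le_supN (segMemC0 hx le_rfl) ⟨hu, h⟩
    have h2 : seg r x 0 u = x u := by simp [seg]
    rw [h2] at h1
    exact h1.trans (hM 0 le_rfl)
  · have h1 : ‖seg r x u 0‖ ≤ supN r (seg r x u) :=
      norm_le_supN (segMemC0 hx h.le) ⟨by linarith, le_rfl⟩
    have h2 : seg r x u 0 = x u := by simp [seg]
    rw [h2] at h1
    exact h1.trans (hM u h.le)

lemma seg_sub_eq (x y : ℝ → Vec n) (t : ℝ) :
    seg r (x - y) t = seg r x t - seg r y t := by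
  funext u; simp [seg]

lemma supN_triangle (hr : 0 < r) {a b : ℝ → Vec n} (ha : MemC0 r a) (hb : MemC0 r b) :
    supN r a ≤ supN r b + supN r (a - b) := by
  apply supN_le hr.le
  intro u hu
  have hbu : a u = b u + (a u - b u) := by abel
  calc ‖a u‖ = ‖b u + (a u - b u)‖ := by rw [← hbu]
    _ ≤ ‖b u‖ + ‖a u - b u‖ := norm_add_le _ _
    _ ≤ supN r b + supN r (a - b) := by
        have h1 := norm_le_supN hb hu
        have h2 := norm_le_supN (g := a - b) (ha.sub hb) hu
        have h3 : ‖(a - b) u‖ = ‖a u - b u‖ := rfl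
        rw [h3] at h2
        linarith

lemma uniform_attractivity (hr : 0 < r) (hf : GoodRHS r f L)
    (hFC : ∀ x0 : ℝ → Vec n, MemC0 r x0 → ∃ x : ℝ → Vec n, IsSol r f x0 x ⊤)
    (Stab : ∀ ε : ℝ, 0 < ε → ∃ δ : ℝ, 0 < δ ∧ ∀ x0 x : ℝ → Vec n, MemC0 r x0 →
        IsSol r f x0 x ⊤ → supN r x0 ≤ δ → ∀ t : ℝ, 0 ≤ t → supN r (seg r x t) ≤ ε)
    (Attr : ∀ x0 x : ℝ → Vec n, MemC0 r x0 → IsSol r f x0 x ⊤ →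
        Tendsto (fun t => supN r (seg r x t)) atTop (nhds 0))
    (Lagr : ∀ ρ : ℝ, 0 < ρ → ∃ M : ℝ, ∀ x0 x : ℝ → Vec n, MemC0 r x0 →
        IsSol r f x0 x ⊤ → supN r x0 ≤ ρ → ∀ t : ℝ, 0 ≤ t → supN r (seg r x t) ≤ M)
    {ρ ε : ℝ} (hρ : 0 < ρ) (hε : 0 < ε) :
    ∃ T : ℝ, 0 ≤ T ∧ ∀ x0 x : ℝ → Vec n, MemC0 r x0 → IsSol r f x0 x ⊤ →
      supN r x0 ≤ ρ → ∀ t : ℝ, T ≤ t → supN r (seg r x t) ≤ ε := by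
  by_contra hcon
  push_neg at hcon
  obtain ⟨δ, hδpos, hδ⟩ := Stab ε hε
  obtain ⟨M, hM⟩ := Lagr ρ hρ
  -- M is nonnegative
  obtain ⟨xz, hxz⟩ := hFC 0 continuousOn_const
  have hM0 : 0 ≤ M := by
    have h1 := hM 0 xz continuousOn_const hxz (by rw [supN_zero hr.le]; exact hρ.le) 0 le_rfl
    exact le_trans (supN_nonneg hr.le _) h1
  obtain ⟨M', hM'⟩ := Lagr (M + 1) (by linarith)
  set Mb : ℝ := max M M' with hMb
  -- extract the bad sequence
  have hseq : ∀ k : ℕ, ∃ x0 x : ℝ → Vec n, MemC0 r x0 ∧ IsSol r f x0 x ⊤ ∧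
      supN r x0 ≤ ρ ∧ ∃ t : ℝ, (k : ℝ) + r ≤ t ∧ ε < supN r (seg r x t) := by
    intro k
    obtain ⟨x0, x, h1, h2, h3, t, h4, h5⟩ := hcon ((k : ℝ) + r) (by positivity)
    exact ⟨x0, x, h1, h2, h3, t, h4, h5⟩
  choose X0 X hX0C hXsol hXρ ts hts hviol using hseq
  set a : ℕ → ℝ := fun k => ts k - (k : ℝ) with ha
  have har : ∀ k, r ≤ a k := fun k => by
    have := hts k; simp only [ha]; linarith
  have ha0 : ∀ k, 0 ≤ a k := fun k => le_trans hr.le (har k)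
  have hXM : ∀ k, ∀ t : ℝ, 0 ≤ t → supN r (seg r (X k) t) ≤ M :=
    fun k => hM (X0 k) (X k) (hX0C k) (hXsol k) (hXρ k)
  have hXpt : ∀ k, ∀ u : ℝ, -r ≤ u → ‖X k u‖ ≤ M :=
    fun k => traj_pt_bound hr (hXsol k).contOn (hXM k)
  set z : ℕ → ℝ → Vec n := fun k => seg r (X k) (a k) with hz
  set w : ℕ → ℝ → Vec n := fun k => fun t => X k (a k + t) with hw
  have hwsol : ∀ k, IsSol r f (z k) (w k) ⊤ :=
    fun k => sol_shift hr hf (hXsol k) (ha0 k)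
  -- z k bounds and Lipschitz
  have hzb : ∀ k, ∀ u ∈ Icc (-r) (0:ℝ), ‖z k u‖ ≤ M := by
    intro k u hu
    exact hXpt k (a k + u) (by have := har k; have := hu.1; linarith)
  have hzl : ∀ k, ∀ u ∈ Icc (-r) (0:ℝ), ∀ v ∈ Icc (-r) (0:ℝ),
      ‖z k u - z k v‖ ≤ (L M * M) * |u - v| := by
    intro k u hu v hv
    have hlip := sol_lip hr hf (hXsol k) (T := a k)
      (fun q hq => hXpt k q hq.1)
      (b := a k + u) (a := a k + v)
      (by have := har k; have := hv.1; linarith)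
      (by have := har k; have := hu.1; linarith)
      (by have := hv.2; linarith)
      (by have := hu.2; linarith)
    have heq : a k + u - (a k + v) = u - v := by ring
    show ‖X k (a k + u) - X k (a k + v)‖ ≤ _
    simpa [heq] using hlip
  have hLMM : 0 ≤ L M * M := mul_nonneg (hf.2.2.2.1 M) hM0
  obtain ⟨y, φ, hφmono, hyC0, hyM, happrox⟩ := arzela_extract hr hLMM z hzb hzl
  -- solution from y
  obtain ⟨Z, hZsol⟩ := hFC y hyC0
  have hyρ' : supN r y ≤ M + 1 := le_trans (supN_le hr.le hyM) (by linarith)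
  have hZM' : ∀ t : ℝ, 0 ≤ t → supN r (seg r Z t) ≤ M' :=
    hM' y Z hyC0 hZsol hyρ'
  -- attractivity of Z : pick τ
  have hAt := Attr y Z hyC0 hZsol
  obtain ⟨N₀, hN₀⟩ := (Metric.tendsto_atTop.1 hAt) (δ/2) (by positivity)
  set τ : ℝ := max N₀ 0 with hτ
  have hτ0 : 0 ≤ τ := le_max_right _ _
  have hZτ : supN r (seg r Z τ) ≤ δ/2 := by
    have := hN₀ τ (le_max_left _ _)
    rw [Real.dist_eq, sub_zero, abs_of_nonneg (supN_nonneg hr.le _)] at this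
    exact this.le
  -- choose j
  set η : ℝ := (δ/2) / Real.exp (L Mb * τ) with hη
  have hηpos : 0 < η := by positivity
  obtain ⟨N₁, hN₁⟩ := happrox η hηpos
  set j : ℕ := max N₁ (Nat.ceil τ) with hj
  set k : ℕ := φ j with hk
  have hjτ : τ ≤ (k : ℝ) := by
    have h1 : j ≤ φ j := hφmono.le_apply
    have h2 : τ ≤ (Nat.ceil τ : ℝ) := Nat.le_ceil τ
    have h3 : (Nat.ceil τ : ℝ) ≤ (j : ℝ) := by
      exact_mod_cast Nat.cast_le.2 (le_max_right N₁ (Nat.ceil τ))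
    have h4 : (j : ℝ) ≤ (k : ℝ) := by exact_mod_cast h1
    linarith
  -- Gronwall between w k and Z on [0, τ]
  have hwM : ∀ t : ℝ, 0 ≤ t → supN r (seg r (w k) t) ≤ M := by
    intro t ht
    have : seg r (w k) t = seg r (X k) (a k + t) := seg_add (X k) (a k) t
    rw [this]
    exact hXM k (a k + t) (by have := ha0 k; linarith)
  have hwMb : ∀ t ∈ Icc (0:ℝ) τ, supN r (seg r (w k) t) ≤ Mb :=
    fun t ht => le_trans (hwM t ht.1) (le_max_left _ _)
  have hZMb : ∀ t ∈ Icc (0:ℝ) τ, supN r (seg r Z t) ≤ Mb :=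
    fun t ht => le_trans (hZM' t ht.1) (le_max_right _ _)
  have hgron := gronwall_sol hr hf (hwsol k) hZsol hwMb hZMb τ ⟨hτ0, le_rfl⟩
  -- initial distance
  have hinit : supN r (seg r (w k - Z) 0) ≤ η := by
    apply supN_le hr.le
    intro u hu
    have h1 : seg r (w k - Z) 0 u = w k u - Z u := by simp [seg]
    rw [h1]
    have h2 : w k u = z k u := rfl
    have h3 : Z u = y u := hZsol.2.1 hu
    rw [h2, h3]
    exact hN₁ j (le_max_left _ _) u hu
  have hexp : supN r (seg r (w k - Z) 0) * Real.exp (L Mb * τ) ≤ δ/2 := by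
    have h1 : Real.exp (L Mb * τ) > 0 := Real.exp_pos _
    calc supN r (seg r (w k - Z) 0) * Real.exp (L Mb * τ)
        ≤ η * Real.exp (L Mb * τ) := by
          apply mul_le_mul_of_nonneg_right hinit h1.le
      _ = δ/2 := by rw [hη]; field_simp
  have hdist : supN r (seg r (w k - Z) τ) ≤ δ/2 := le_trans hgron hexp
  -- stability kicks in at time τ
  have hwτ : supN r (seg r (w k) τ) ≤ δ := by
    have htri := supN_triangle hr (segMemC0 (hwsol k).contOn hτ0) (segMemC0 hZsol.contOn hτ0)
    have heq2 : seg r (w k) τ - seg r Z τ = seg r (w k - Z) τ := (seg_sub_eq _ _ _).symm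
    rw [heq2] at htri
    linarith
  -- shifted solution from seg (w k) τ
  have hvsol : IsSol r f (seg r (w k) τ) (fun t => w k (τ + t)) ⊤ :=
    sol_shift hr hf (hwsol k) hτ0
  have hstab := hδ (seg r (w k) τ) (fun t => w k (τ + t))
    (segMemC0 (hwsol k).contOn hτ0) hvsol hwτ ((k : ℝ) - τ) (by linarith)
  -- contradiction with the violation at time ts k
  have hfinal : supN r (seg r (fun t => w k (τ + t)) ((k:ℝ) - τ)) = supN r (seg r (X k) (ts k)) := by
    have h1 : seg r (fun t => w k (τ + t)) ((k:ℝ) - τ) = seg r (w k) (τ + ((k:ℝ) - τ)) :=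
      seg_add (w k) τ _
    have h2 : τ + ((k:ℝ) - τ) = (k : ℝ) := by ring
    have h3 : seg r (w k) ((k:ℝ)) = seg r (X k) (a k + (k:ℝ)) := seg_add (X k) (a k) _
    have h4 : a k + (k:ℝ) = ts k := by simp [ha]
    rw [h1, h2, h3, h4]
  rw [hfinal] at hstab
  exact absurd hstab (not_le.2 (hviol k))

end AuxLemmas5

/-- For a forward-complete time-invariant delay system on `C⁰`,
(Lyapunov stability ∧ global attractivity ∧ Lagrange stability) ↔ UGAS. -/
theorem stmt1 (n : ℕ) (hn : 1 ≤ n) (r : ℝ) (hr : 0 < r)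
    (f : (ℝ → Vec n) → Vec n) (L : ℝ → ℝ) (hf : GoodRHS r f L)
    (hFC : ∀ x0 : ℝ → Vec n, MemC0 r x0 → ∃ x : ℝ → Vec n, IsSol r f x0 x ⊤) :
    ((∀ ε : ℝ, 0 < ε → ∃ δ : ℝ, 0 < δ ∧ ∀ x0 x : ℝ → Vec n, MemC0 r x0 →
        IsSol r f x0 x ⊤ → supN r x0 ≤ δ → ∀ t : ℝ, 0 ≤ t → supN r (seg r x t) ≤ ε) ∧
     (∀ x0 x : ℝ → Vec n, MemC0 r x0 → IsSol r f x0 x ⊤ →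
        Tendsto (fun t => supN r (seg r x t)) atTop (nhds 0)) ∧
     (∀ ρ : ℝ, 0 < ρ → ∃ M : ℝ, ∀ x0 x : ℝ → Vec n, MemC0 r x0 →
        IsSol r f x0 x ⊤ → supN r x0 ≤ ρ → ∀ t : ℝ, 0 ≤ t → supN r (seg r x t) ≤ M))
    ↔
    (∃ σ : ℝ → ℝ → ℝ, ClassKL σ ∧ ∀ x0 x : ℝ → Vec n, MemC0 r x0 →
        IsSol r f x0 x ⊤ → ∀ t : ℝ, 0 ≤ t → supN r (seg r x t) ≤ σ (supN r x0) t) := by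
  constructor
  · rintro ⟨Stab, Attr, Lagr⟩
    classical
    obtain ⟨xz, hxz⟩ := hFC 0 continuousOn_const
    set B : ℝ → ℝ → Set ℝ := fun s t =>
      {c | ∃ x0 x : ℝ → Vec n, ∃ τ : ℝ, MemC0 r x0 ∧ IsSol r f x0 x ⊤ ∧
        supN r x0 ≤ s ∧ t ≤ τ ∧ 0 ≤ τ ∧ c = supN r (seg r x τ)} with hB
    have hBne : ∀ s t : ℝ, 0 ≤ s → (B s t).Nonempty := by
      intro s t hs
      exact ⟨supN r (seg r xz (max t 0)), 0, xz, max t 0, continuousOn_const, hxz,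
        by rw [supN_zero hr.le]; exact hs, le_max_left _ _, le_max_right _ _, rfl⟩
    have hBbdd : ∀ s t : ℝ, 0 ≤ s → BddAbove (B s t) := by
      intro s t hs
      obtain ⟨Ms, hMs⟩ := Lagr (s+1) (by linarith)
      refine ⟨Ms, ?_⟩
      rintro c ⟨x0, x, τ, h1, h2, h3, h4, h5, rfl⟩
      exact hMs x0 x h1 h2 (by linarith) τ h5
    set b : ℝ → ℝ → ℝ := fun s t => sSup (B s t) with hbdef
    have hbnn : ∀ s t : ℝ, 0 ≤ s → 0 ≤ b s t := by
      intro s t hs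
      obtain ⟨c, hc⟩ := hBne s t hs
      have hc0 : 0 ≤ c := by
        obtain ⟨x0, x, τ, _, _, _, _, _, rfl⟩ := hc
        exact supN_nonneg hr.le _
      exact le_trans hc0 (le_csSup (hBbdd s t hs) hc)
    have hble : ∀ (s t : ℝ) (x0 x : ℝ → Vec n), 0 ≤ s → 0 ≤ t → MemC0 r x0 →
        IsSol r f x0 x ⊤ → supN r x0 ≤ s → supN r (seg r x t) ≤ b s t := by
      intro s t x0 x hs ht h1 h2 h3
      exact le_csSup (hBbdd s t hs) ⟨x0, x, t, h1, h2, h3, le_rfl, ht, rfl⟩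
    have hbmono : ∀ t : ℝ, MonotoneOn (fun s => b s t) (Ici 0) := by
      intro t s hs s' hs' hss'
      apply csSup_le_csSup (hBbdd s' t hs') (hBne s t hs)
      rintro c ⟨x0, x, τ, h1, h2, h3, h4, h5, rfl⟩
      exact ⟨x0, x, τ, h1, h2, le_trans h3 hss', h4, h5, rfl⟩
    have hbanti : ∀ s : ℝ, 0 ≤ s → ∀ t t' : ℝ, t ≤ t' → b s t' ≤ b s t := by
      intro s hs t t' htt'
      apply csSup_le_csSup (hBbdd s t hs) (hBne s t' hs)
      rintro c ⟨x0, x, τ, h1, h2, h3, h4, h5, rfl⟩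
      exact ⟨x0, x, τ, h1, h2, h3, le_trans htt' h4, h5, rfl⟩
    have hbstab : ∀ ε : ℝ, 0 < ε → ∃ δ' : ℝ, 0 < δ' ∧ ∀ s : ℝ, 0 ≤ s → s ≤ δ' →
        b s 0 ≤ ε := by
      intro ε hε
      obtain ⟨δ, hδpos, hδ⟩ := Stab ε hε
      refine ⟨δ, hδpos, fun s hs hsδ => ?_⟩
      apply csSup_le (hBne s 0 hs)
      rintro c ⟨x0, x, τ, h1, h2, h3, h4, h5, rfl⟩
      exact hδ x0 x h1 h2 (le_trans h3 hsδ) τ h5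
    have hbua : ∀ s : ℝ, 0 ≤ s → ∀ ε : ℝ, 0 < ε → ∃ T : ℝ, ∀ t : ℝ, T ≤ t →
        b s t ≤ ε := by
      intro s hs ε hε
      obtain ⟨T, hT0, hT⟩ := uniform_attractivity hr hf hFC Stab Attr Lagr
        (ρ := s + 1) (by linarith) hε
      refine ⟨T, fun t ht => ?_⟩
      apply csSup_le (hBne s t hs)
      rintro c ⟨x0, x, τ, h1, h2, h3, h4, h5, rfl⟩
      exact hT x0 x h1 h2 (by linarith) τ (le_trans ht h4)
    have hbint : ∀ (t a₁ a₂ : ℝ), 0 ≤ a₁ → a₁ ≤ a₂ →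
        IntervalIntegrable (fun u => b u t) volume a₁ a₂ := by
      intro t a₁ a₂ ha₁ h12
      apply MonotoneOn.intervalIntegrable
      rw [uIcc_of_le h12]
      exact (hbmono t).mono (fun u hu => le_trans ha₁ hu.1)
    set σ : ℝ → ℝ → ℝ := fun s t =>
      (if s ≤ 0 then 0 else s⁻¹ * ∫ u in s..(2*s), b u t) + s * Real.exp (-t) with hσdef
    have hσ0 : ∀ t : ℝ, σ 0 t = 0 := by intro t; simp [hσdef]
    have hq1 : ∀ s t : ℝ, 0 < s → b s t ≤ s⁻¹ * ∫ u in s..(2*s), b u t := by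
      intro s t hs
      have hii : ∫ _u in s..(2*s), b s t ≤ ∫ u in s..(2*s), b u t := by
        apply intervalIntegral.integral_mono_on (by linarith) intervalIntegrable_const
          (hbint t s (2*s) hs.le (by linarith))
        intro u hu
        exact hbmono t (mem_Ici.2 hs.le) (mem_Ici.2 (le_trans hs.le hu.1)) hu.1
      rw [intervalIntegral.integral_const, smul_eq_mul] at hii
      have h2 : s * b s t ≤ ∫ u in s..(2*s), b u t := by
        have he : (2*s - s) = s := by ring
        rwa [he] at hii
      calc b s t = s⁻¹ * (s * b s t) := by field_simp
        _ ≤ s⁻¹ * ∫ u in s..(2*s), b u t :=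
            mul_le_mul_of_nonneg_left h2 (inv_nonneg.2 hs.le)
    have hq2 : ∀ s t : ℝ, 0 < s → s⁻¹ * (∫ u in s..(2*s), b u t) ≤ b (2*s) t := by
      intro s t hs
      have hii : ∫ u in s..(2*s), b u t ≤ ∫ _u in s..(2*s), b (2*s) t := by
        apply intervalIntegral.integral_mono_on (by linarith)
          (hbint t s (2*s) hs.le (by linarith)) intervalIntegrable_const
        intro u hu
        exact hbmono t (mem_Ici.2 (le_trans hs.le hu.1)) (mem_Ici.2 (by linarith)) hu.2
      rw [intervalIntegral.integral_const, smul_eq_mul] at hii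
      have he : (2*s - s) = s := by ring
      rw [he] at hii
      calc s⁻¹ * (∫ u in s..(2*s), b u t) ≤ s⁻¹ * (s * b (2*s) t) :=
            mul_le_mul_of_nonneg_left hii (inv_nonneg.2 hs.le)
        _ = b (2*s) t := by field_simp
    have hqrepr : ∀ s t : ℝ, 0 < s →
        s⁻¹ * ∫ u in s..(2*s), b u t = ∫ v in (1:ℝ)..2, b (s*v) t := by
      intro s t hs
      have h := intervalIntegral.integral_comp_mul_left (a := (1:ℝ)) (b := 2)
        (fun u => b u t) (ne_of_gt hs)
      rw [mul_one] at h
      have h2 : s * 2 = 2 * s := by ring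
      rw [h2] at h
      rw [h, smul_eq_mul]
    have hqmono : ∀ t s s' : ℝ, 0 < s → s ≤ s' →
        s⁻¹ * (∫ u in s..(2*s), b u t) ≤ s'⁻¹ * ∫ u in s'..(2*s'), b u t := by
      intro t s s' hs hss'
      have hs' : 0 < s' := lt_of_lt_of_le hs hss'
      rw [hqrepr s t hs, hqrepr s' t hs']
      apply intervalIntegral.integral_mono_on (by norm_num)
      · apply MonotoneOn.intervalIntegrable
        rw [uIcc_of_le (by norm_num : (1:ℝ) ≤ 2)]
        intro v hv v' hv' hvv'
        exact hbmono t (mem_Ici.2 (by nlinarith [hv.1])) (mem_Ici.2 (by nlinarith [hv'.1]))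
          (by nlinarith)
      · apply MonotoneOn.intervalIntegrable
        rw [uIcc_of_le (by norm_num : (1:ℝ) ≤ 2)]
        intro v hv v' hv' hvv'
        exact hbmono t (mem_Ici.2 (by nlinarith [hv.1])) (mem_Ici.2 (by nlinarith [hv'.1]))
          (by nlinarith)
      · intro v hv
        exact hbmono t (mem_Ici.2 (by nlinarith [hv.1])) (mem_Ici.2 (by nlinarith [hv.1]))
          (by nlinarith [hv.1])
    have hσnn : ∀ s t : ℝ, 0 ≤ s → 0 ≤ σ s t := by
      intro s t hs
      rcases le_or_gt s 0 with h | h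
      · have hs0 : s = 0 := le_antisymm h hs
        rw [hs0, hσ0]
      · have h1 : 0 ≤ s⁻¹ * ∫ u in s..(2*s), b u t :=
          le_trans (hbnn s t hs) (hq1 s t h)
        have h2 : 0 ≤ s * Real.exp (-t) := by positivity
        rw [hσdef]
        simp only [if_neg (not_le.2 h)]
        linarith
    -- continuity in s
    have hσcont : ∀ t : ℝ, 0 ≤ t → ContinuousOn (fun s => σ s t) (Ici 0) := by
      intro t ht s₀ hs₀
      rcases eq_or_lt_of_le (mem_Ici.1 hs₀) with h0 | hpos
      · -- s₀ = 0
        have hs₀0 : s₀ = 0 := h0.symm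
        subst hs₀0
        rw [Metric.continuousWithinAt_iff]
        intro ε hε
        obtain ⟨δ', hδ'pos, hδ'⟩ := hbstab (ε/4) (by positivity)
        refine ⟨min (δ'/2) (ε/4), by positivity, ?_⟩
        intro s hs hdist
        have hs0 : (0:ℝ) ≤ s := hs
        rw [Real.dist_eq, sub_zero, abs_of_nonneg hs0] at hdist
        rw [hσ0, Real.dist_eq, sub_zero, abs_of_nonneg (hσnn s t hs0)]
        rcases le_or_gt s 0 with h | h
        · have hseq : s = 0 := le_antisymm h hs0
          rw [hseq, hσ0]; exact hε
        · have hb2s : b (2*s) t ≤ ε/4 := by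
            have h1 : b (2*s) t ≤ b (2*s) 0 := hbanti (2*s) (by linarith) 0 t ht
            have h2 : b (2*s) 0 ≤ ε/4 := hδ' (2*s) (by linarith)
              (by have := lt_of_lt_of_le hdist (min_le_left _ _); linarith)
            linarith
          have hse : s * Real.exp (-t) ≤ s := by
            have h1 : Real.exp (-t) ≤ 1 := Real.exp_le_one_iff.2 (by linarith)
            nlinarith
          have hsε : s < ε/4 := lt_of_lt_of_le hdist (min_le_right _ _)
          rw [hσdef]
          simp only [if_neg (not_le.2 h)]
          have hq := hq2 s t h
          linarith
      · -- s₀ > 0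
        set A : ℝ := 2*s₀ + 2 with hA
        have hA0 : 0 ≤ A := by linarith
        have hPint : IntegrableOn (fun u => b u t) (uIcc 0 A) := by
          rw [uIcc_of_le hA0]
          exact MonotoneOn.integrableOn_isCompact isCompact_Icc
            ((hbmono t).mono (fun u hu => hu.1))
        have hPc : ContinuousOn (fun v => ∫ u in (0:ℝ)..v, b u t) (Icc 0 A) := by
          have := intervalIntegral.continuousOn_primitive_interval hPint
          rwa [uIcc_of_le hA0] at this
        set P : ℝ → ℝ := fun v => ∫ u in (0:ℝ)..v, b u t with hP
        have hU : ∀ s ∈ Ioo (0:ℝ) (s₀+1),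
            σ s t = s⁻¹ * (P (2*s) - P s) + s * Real.exp (-t) := by
          intro s hs
          have hsplit := intervalIntegral.integral_add_adjacent_intervals
            (hbint t 0 s le_rfl hs.1.le) (hbint t s (2*s) hs.1.le (by nlinarith [hs.1]))
          have heq : ∫ u in s..(2*s), b u t = P (2*s) - P s := by
            rw [hP]; simp only; linarith [hsplit]
          rw [hσdef]
          simp only [if_neg (not_le.2 hs.1)]
          rw [heq]
        have hgcont : ContinuousOn
            (fun s => s⁻¹ * (P (2*s) - P s) + s * Real.exp (-t)) (Ioo 0 (s₀+1)) := by
          apply ContinuousOn.add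
          · apply ContinuousOn.mul
            · exact ContinuousOn.inv₀ continuousOn_id (fun s hs => ne_of_gt hs.1)
            · apply ContinuousOn.sub
              · apply hPc.comp ((continuous_const.mul continuous_id).continuousOn)
                intro s hs
                show (2:ℝ) * s ∈ Icc 0 A
                rw [mem_Icc]
                exact ⟨by nlinarith [hs.1], by nlinarith [hs.2]⟩
              · apply hPc.comp continuous_id.continuousOn
                intro s hs
                show s ∈ Icc 0 A
                rw [mem_Icc]
                exact ⟨hs.1.le, by nlinarith [hs.2]⟩
          · exact continuousOn_id.mul continuousOn_const
        have hmem : Ioo (0:ℝ) (s₀+1) ∈ nhds s₀ := Ioo_mem_nhds hpos (lt_add_one s₀)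
        have hAt : ContinuousAt (fun s => σ s t) s₀ := by
          apply ContinuousAt.congr (hgcont.continuousAt hmem)
          filter_upwards [hmem] with s hs
          exact (hU s hs).symm
        exact hAt.continuousWithinAt
    -- strict monotonicity in s
    have hσmono : ∀ t : ℝ, StrictMonoOn (fun s => σ s t) (Ici 0) := by
      intro t s hs s' hs' hss'
      simp only
      rcases eq_or_lt_of_le (mem_Ici.1 hs) with h0 | hpos
      · have hs0 : s = 0 := h0.symm
        subst hs0
        rw [hσ0]
        have h1 : 0 ≤ s'⁻¹ * ∫ u in s'..(2*s'), b u t :=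
          le_trans (hbnn s' t hss'.le) (hq1 s' t hss')
        have h2 : 0 < s' * Real.exp (-t) := by positivity
        rw [hσdef]
        simp only [if_neg (not_le.2 hss')]
        linarith
      · have hpos' : 0 < s' := lt_trans hpos hss'
        rw [hσdef]
        simp only [if_neg (not_le.2 hpos), if_neg (not_le.2 hpos')]
        have h1 := hqmono t s s' hpos hss'.le
        have h2 : s * Real.exp (-t) < s' * Real.exp (-t) :=
          mul_lt_mul_of_pos_right hss' (Real.exp_pos _)
        linarith
    -- antitone in t
    have hσanti : ∀ s : ℝ, 0 ≤ s → AntitoneOn (fun t => σ s t) (Ici 0) := by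
      intro s hs t ht t' ht' htt'
      simp only
      rcases le_or_gt s 0 with h | h
      · have hs0 : s = 0 := le_antisymm h hs
        subst hs0
        rw [hσ0, hσ0]
      · rw [hσdef]
        simp only [if_neg (not_le.2 h)]
        have h1 : ∫ u in s..(2*s), b u t' ≤ ∫ u in s..(2*s), b u t := by
          apply intervalIntegral.integral_mono_on (by linarith)
            (hbint t' s (2*s) h.le (by linarith)) (hbint t s (2*s) h.le (by linarith))
          intro u hu
          exact hbanti u (le_trans h.le hu.1) t t' htt'
        have h2 : s * Real.exp (-t') ≤ s * Real.exp (-t) := by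
          apply mul_le_mul_of_nonneg_left _ h.le
          exact Real.exp_le_exp.2 (by linarith)
        have h3 := mul_le_mul_of_nonneg_left h1 (inv_nonneg.2 h.le)
        linarith
    -- tendsto 0
    have hσtend : ∀ s : ℝ, 0 ≤ s → Tendsto (fun t => σ s t) atTop (nhds 0) := by
      intro s hs
      rcases eq_or_lt_of_le hs with h0 | hpos
      · have hs0 : s = 0 := h0.symm
        subst hs0
        have he : (fun t => σ 0 t) = fun _ => (0:ℝ) := by funext t; rw [hσ0]
        rw [he]
        exact tendsto_const_nhds
      · have hup : Tendsto (fun t => b (2*s) t + s * Real.exp (-t)) atTop (nhds 0) := by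
          have h1 : Tendsto (fun t => b (2*s) t) atTop (nhds 0) := by
            rw [Metric.tendsto_atTop]
            intro ε hε
            obtain ⟨T, hT⟩ := hbua (2*s) (by linarith) (ε/2) (by positivity)
            refine ⟨T, fun t ht => ?_⟩
            rw [Real.dist_eq, sub_zero, abs_of_nonneg (hbnn (2*s) t (by linarith))]
            linarith [hT t ht]
          have h2 : Tendsto (fun t : ℝ => s * Real.exp (-t)) atTop (nhds 0) := by
            have := (Real.tendsto_exp_neg_atTop_nhds_zero).const_mul s
            simpa using this
          simpa using h1.add h2
        apply tendsto_of_tendsto_of_tendsto_of_le_of_le' tendsto_const_nhds hup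
        · exact Filter.Eventually.of_forall (fun t => hσnn s t hs)
        · apply Filter.Eventually.of_forall
          intro t
          rw [hσdef]
          simp only [if_neg (not_le.2 hpos)]
          have := hq2 s t hpos
          linarith
    refine ⟨σ, ⟨fun s t hs _ => hσnn s t hs,
      fun t ht => ⟨hσcont t ht, hσmono t, hσ0 t⟩,
      fun s hs => ⟨hσanti s hs, hσtend s hs⟩⟩, ?_⟩
    -- the KL bound
    intro x0 x hC hsol t ht
    set s : ℝ := supN r x0 with hsdef
    have hs0 : 0 ≤ s := supN_nonneg hr.le x0
    rcases eq_or_lt_of_le hs0 with h0 | hpos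
    · have hseq : s = 0 := h0.symm
      rw [hseq, hσ0]
      apply le_of_forall_pos_le_add
      intro ε hε
      obtain ⟨δ, hδpos, hδ⟩ := Stab ε hε
      have := hδ x0 x hC hsol (by rw [← hsdef, hseq]; exact hδpos.le) t ht
      linarith
    · have h1 : supN r (seg r x t) ≤ b s t := hble s t x0 x hs0 ht hC hsol le_rfl
      have h2 := hq1 s t hpos
      have h3 : 0 ≤ s * Real.exp (-t) := by positivity
      rw [hσdef]
      simp only [if_neg (not_le.2 hpos)]
      linarith
  · rintro ⟨σ, ⟨hσnn, hσs, hσt⟩, hbd⟩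
    refine ⟨?_, ?_, ?_⟩
    · -- Lyapunov stability
      intro ε hε
      obtain ⟨hcont, hsmono, hzero⟩ := hσs 0 le_rfl
      have hcw : ContinuousWithinAt (fun s => σ s 0) (Ici 0) 0 :=
        hcont 0 (mem_Ici.2 le_rfl)
      rw [Metric.continuousWithinAt_iff] at hcw
      obtain ⟨δ, hδpos, hδ⟩ := hcw ε hε
      refine ⟨δ/2, by positivity, ?_⟩
      intro x0 x hC hsol hx0 t ht
      set s : ℝ := supN r x0 with hsdef
      have hs0 : 0 ≤ s := supN_nonneg hr.le x0
      have hsδ : s < δ := by linarith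
      have h1 : σ s 0 < ε := by
        have := hδ (mem_Ici.2 hs0) (by rw [Real.dist_eq, sub_zero, abs_of_nonneg hs0]; exact hsδ)
        rw [Real.dist_eq, hzero, sub_zero] at this
        calc σ s 0 ≤ |σ s 0| := le_abs_self _
          _ < ε := this
      have h2 : σ s t ≤ σ s 0 := (hσt s hs0).1 (mem_Ici.2 le_rfl) (mem_Ici.2 ht) ht
      have h3 := hbd x0 x hC hsol t ht
      rw [← hsdef] at h3
      linarith
    · -- attractivity
      intro x0 x hC hsol
      set s : ℝ := supN r x0 with hsdef
      have hs0 : 0 ≤ s := supN_nonneg hr.le x0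
      apply tendsto_of_tendsto_of_tendsto_of_le_of_le' tendsto_const_nhds (hσt s hs0).2
      · exact Filter.Eventually.of_forall (fun t => supN_nonneg hr.le _)
      · filter_upwards [Filter.eventually_ge_atTop (0:ℝ)] with t ht
        have := hbd x0 x hC hsol t ht
        rwa [← hsdef] at this
    · -- Lagrange
      intro ρ hρ
      refine ⟨σ ρ 0, ?_⟩
      intro x0 x hC hsol hx0 t ht
      set s : ℝ := supN r x0 with hsdef
      have hs0 : 0 ≤ s := supN_nonneg hr.le x0
      have h1 : σ s t ≤ σ s 0 := (hσt s hs0).1 (mem_Ici.2 le_rfl) (mem_Ici.2 ht) ht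
      have h2 : σ s 0 ≤ σ ρ 0 :=
        (hσs 0 le_rfl).2.1.monotoneOn (mem_Ici.2 hs0) (mem_Ici.2 hρ.le) hx0
      have h3 := hbd x0 x hC hsol t ht
      rw [← hsdef] at h3
      linarith
end
end
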